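/- arXiv:2402.04649 — 5 statements merged into one kernel-verified Lean document; each statement's English description precedes it below -/
import Mathlib

section
/- Let n ≥ 2 and let f : [0, π/2] → (0, ∞) be a continuous positive function. Let ν be the probability measure on the upper half-sphere S^n_+ with density x ↦ f(d(x,N)) with respect to σ_+ (suitably normalized so that ν is a probability measure). Suppose T : S^n_+ → S^n_+ is a measurable map with T_#σ_+ = ν which minimizes ∫ d(x, S(x))² dσ_+(x) among all measurable maps S with S_#σ_+ = ν (i.e., T is a quadratic-cost optimal transport map from σ_+ to ν). If T is 1-Lipschitz with respect to the geodesic distance d, then ν = σ_+. -/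
open MeasureTheory Real
open scoped ENNReal NNReal

noncomputable section

/-- Euclidean space `ℝ^{n+1}`. -/
abbrev Euc (n : ℕ) := EuclideanSpace ℝ (Fin (n + 1))

/-- The unit sphere `S^n ⊆ ℝ^{n+1}`. -/
def unitSphere (n : ℕ) : Set (Euc n) := Metric.sphere 0 1

/-- The closed upper half-sphere `S^n_+`. -/
def upperHemi (n : ℕ) : Set (Euc n) := {x ∈ unitSphere n | 0 ≤ x (Fin.last n)}

/-- The equator `C = S^n_+ ∩ {x_{n+1} = 0}`. -/
def equator (n : ℕ) : Set (Euc n) := {x ∈ upperHemi n | x (Fin.last n) = 0}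

/-- The geodesic distance on the sphere: `d(x,y) = arccos (x ⬝ y)`. -/
def geod {n : ℕ} (x y : Euc n) : ℝ := Real.arccos (inner ℝ x y)

/-- The north pole `N = (0,…,0,1)`. -/
def northPole (n : ℕ) : Euc n := EuclideanSpace.single (Fin.last n) 1

/-- The uniform probability measure `σ_+` on the upper half-sphere, i.e. the normalized
restriction to `S^n_+` of the `n`-dimensional Hausdorff measure. -/
def sigmaPlus (n : ℕ) : Measure (Euc n) :=
  ((μH[n] : Measure (Euc n)) (upperHemi n))⁻¹ • (μH[n] : Measure (Euc n)).restrict (upperHemi n)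


-- ### Auxiliary lemmas ###

section Aux
open Function

-- step: iterates of 1-Lipschitz maps
private lemma iter_lip {X : Type*} [MetricSpace X] {f : X → X}
    (hl : ∀ x y, dist (f x) (f y) ≤ dist x y) (m : ℕ) (x y : X) :
    dist (f^[m] x) (f^[m] y) ≤ dist x y := by
  induction m generalizing x y with
  | zero => simp
  | succ k ih => rw [Function.iterate_succ_apply]; exact (ih (f x) (f y)).trans (hl x y)

private lemma almost_periodic {X : Type*} [MetricSpace X] [CompactSpace X] {f : X → X}
    (hsurj : Function.Surjective f) (hl : ∀ x y, dist (f x) (f y) ≤ dist x y)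
    (p : X) {ε : ℝ} (hε : 0 < ε) : ∃ m, 1 ≤ m ∧ dist (f^[m] p) p < ε := by
  -- backward orbit
  let q : ℕ → X := fun k => (surjInv hsurj)^[k] p
  have hq : ∀ k, f^[k] (q k) = p := by
    intro k
    induction k with
    | zero => rfl
    | succ k ih =>
      have : q (k+1) = surjInv hsurj (q k) := by
        simp only [q, Function.iterate_succ_apply']
      rw [this, Function.iterate_succ_apply, surjInv_eq hsurj, ih]
  obtain ⟨a, φ, hφ, hconv⟩ := CompactSpace.tendsto_subseq q
  rw [Metric.tendsto_atTop] at hconv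
  obtain ⟨K, hK⟩ := hconv (ε/2) (by linarith)
  have h1 : dist (q (φ K)) (q (φ (K+1))) < ε := by
    have := hK K le_rfl
    have := hK (K+1) (by omega)
    calc dist (q (φ K)) (q (φ (K+1)))
        ≤ dist (q (φ K)) a + dist (q (φ (K+1))) a := dist_triangle_right _ _ _
      _ < ε := by
          have h1 := hK K le_rfl
          have h2 := hK (K+1) (by omega)
          simp only [Function.comp_apply] at h1 h2
          linarith
  set i := φ K
  set j := φ (K+1)
  have hij : i < j := hφ (by omega)
  refine ⟨j - i, by omega, ?_⟩
  have e1 : f^[j] (q i) = f^[j-i] p := by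
    conv_lhs => rw [show j = (j - i) + i by omega]
    rw [Function.iterate_add_apply, hq i]
  have e2 : f^[j] (q j) = p := hq j
  calc dist (f^[j-i] p) p = dist (f^[j] (q i)) (f^[j] (q j)) := by rw [e1, e2]
    _ ≤ dist (q i) (q j) := iter_lip hl j _ _
    _ < ε := h1

lemma lipschitz_surj_isometry {X : Type*} [MetricSpace X] [CompactSpace X] {f : X → X}
    (hsurj : Function.Surjective f) (hl : ∀ x y, dist (f x) (f y) ≤ dist x y) :
    ∀ x y, dist (f x) (f y) = dist x y := by
  intro x y
  refine le_antisymm (hl x y) ?_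
  -- work in the product
  set g : X × X → X × X := Prod.map f f with hg
  have hgs : Function.Surjective g := Function.Surjective.prodMap hsurj hsurj
  have hgl : ∀ a b : X × X, dist (g a) (g b) ≤ dist a b := by
    intro a b
    rw [Prod.dist_eq, Prod.dist_eq]
    exact max_le_max (hl _ _) (hl _ _)
  have hiter : ∀ m (a : X × X), g^[m] a = (f^[m] a.1, f^[m] a.2) := by
    intro m
    induction m with
    | zero => intro a; rfl
    | succ k ih => intro a; rw [Function.iterate_succ_apply, ih]; rfl
  have key : ∀ ε > 0, dist x y ≤ dist (f x) (f y) + 2 * ε := by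
    intro ε hε
    obtain ⟨m, hm1, hm⟩ := almost_periodic hgs hgl (x, y) hε
    rw [hiter, Prod.dist_eq, max_lt_iff] at hm
    have h2 : dist (f^[m] x) (f^[m] y) ≤ dist (f x) (f y) := by
      obtain ⟨k, rfl⟩ : ∃ k, m = k + 1 := ⟨m - 1, by omega⟩
      rw [Function.iterate_succ_apply, Function.iterate_succ_apply]
      exact iter_lip hl k _ _
    calc dist x y ≤ dist x (f^[m] x) + dist (f^[m] x) (f^[m] y) + dist (f^[m] y) y :=
          dist_triangle4 _ _ _ _
      _ ≤ ε + dist (f x) (f y) + ε := by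
          have h1 := hm.1
          have h2 := hm.2
          rw [dist_comm x (f^[m] x)]
          gcongr
      _ = dist (f x) (f y) + 2 * ε := by ring
  by_contra h
  push_neg at h
  obtain ⟨ε, hε, hlt⟩ : ∃ ε > 0, dist (f x) (f y) + 2 * ε < dist x y :=
    ⟨(dist x y - dist (f x) (f y)) / 4, by linarith, by linarith⟩
  exact absurd (key ε hε) (by linarith)


lemma norm_of_hemi {n : ℕ} {x : Euc n} (hx : x ∈ upperHemi n) : ‖x‖ = 1 := by
  have := hx.1
  simpa [unitSphere, mem_sphere_iff_norm] using this

lemma inner_mem_Icc {n : ℕ} {x y : Euc n} (hx : ‖x‖ = 1) (hy : ‖y‖ = 1) :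
    (inner ℝ x y : ℝ) ∈ Set.Icc (-1 : ℝ) 1 := by
  have h := abs_real_inner_le_norm x y
  rw [hx, hy, mul_one] at h
  exact ⟨neg_le_of_abs_le h, le_of_abs_le h⟩

lemma dist_sq_eq {n : ℕ} {x y : Euc n} (hx : ‖x‖ = 1) (hy : ‖y‖ = 1) :
    dist x y ^ 2 = 2 - 2 * (inner ℝ x y : ℝ) := by
  rw [dist_eq_norm, @norm_sub_sq_real, hx, hy]; ring

/-- geodesic contraction implies Euclidean contraction on the sphere -/
lemma dist_le_of_geod_le {n : ℕ} {x y a b : Euc n} (hx : ‖x‖ = 1) (hy : ‖y‖ = 1)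
    (ha : ‖a‖ = 1) (hb : ‖b‖ = 1) (h : geod a b ≤ geod x y) : dist a b ≤ dist x y := by
  have hxy := inner_mem_Icc hx hy
  have hab := inner_mem_Icc ha hb
  have h1 : (inner ℝ x y : ℝ) ≤ inner ℝ a b := by
    have hc : Real.cos (geod x y) ≤ Real.cos (geod a b) :=
      Real.cos_le_cos_of_nonneg_of_le_pi (Real.arccos_nonneg _) (Real.arccos_le_pi _) h
    rwa [geod, geod, Real.cos_arccos hxy.1 hxy.2, Real.cos_arccos hab.1 hab.2] at hc
  have h2 : dist a b ^ 2 ≤ dist x y ^ 2 := by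
    rw [dist_sq_eq hx hy, dist_sq_eq ha hb]; linarith
  calc dist a b = Real.sqrt (dist a b ^ 2) := (Real.sqrt_sq dist_nonneg).symm
    _ ≤ Real.sqrt (dist x y ^ 2) := Real.sqrt_le_sqrt h2
    _ = dist x y := Real.sqrt_sq dist_nonneg

private lemma aux_norm {n : ℕ} {z w : Euc n} (hz1 : ‖z‖ = 1) (hzw : (inner ℝ z w : ℝ) = 0)
    (a : ℝ) : ‖a • z + w‖ ^ 2 = a ^ 2 + ‖w‖ ^ 2 := by
  rw [@norm_add_sq_real, norm_smul, real_inner_smul_left, hzw, Real.norm_eq_abs, hz1, mul_one,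
    sq_abs]
  ring

private lemma aux_inner {n : ℕ} {z w : Euc n} (hz1 : ‖z‖ = 1) (hzw : (inner ℝ z w : ℝ) = 0)
    (a : ℝ) : (inner ℝ (a • z + w) z : ℝ) = a := by
  rw [inner_add_left, real_inner_smul_left, real_inner_self_eq_norm_sq, hz1, real_inner_comm,
    hzw]
  ring

private lemma last_coord {n : ℕ} (y : Euc n) :
    y (Fin.last n) = (inner ℝ y (EuclideanSpace.single (Fin.last n) (1:ℝ)) : ℝ) := by
  rw [EuclideanSpace.inner_single_right]
  simp

private lemma r0 {t s2 : ℝ} (ht2 : t ^ 2 = 1 - s2) (ht0 : 0 ≤ t) (ht1 : t ≤ 1) :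
    1 - s2 ≤ t := by nlinarith

private lemma r1 {D t s2 s0 r : ℝ} (hD0 : 0 ≤ D) (hd2 : D ^ 2 = 2 - 2 * t)
    (htge : 1 - s2 ≤ t) (hs2nn : 0 ≤ s2) (hc1 : s2 < s0 ^ 2) (hs0r : s0 ≤ r / 2)
    (hs0 : 0 < s0) (hr : 0 < r) : D < r := by nlinarith

private lemma r2 {N t s2 : ℝ} (h : N ^ 2 = t ^ 2 + s2) (ht2 : t ^ 2 = 1 - s2)
    (hN : 0 ≤ N) : N = 1 := by nlinarith

private lemma r3 {D t s2 : ℝ} (h : D ^ 2 = (t - 1) ^ 2 + s2) (ht2 : t ^ 2 = 1 - s2) :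
    D ^ 2 = 2 - 2 * t := by nlinarith

private lemma r4 {s0 : ℝ} (h : 0 < s0) (h2 : s0 ≤ 1 / 2) : s0 ^ 2 ≤ 1 := by nlinarith

/-- key inclusion: a half-ball in coordinates lies in the image of a spherical half-cap
under the coordinate map. -/
private lemma cap_sub {n : ℕ} {z : Euc n} (hz1 : ‖z‖ = 1) (hzlast : 0 ≤ z (Fin.last n))
    {B : Fin n → Euc n} (hB : Orthonormal ℝ B) (hzB : ∀ i, (inner ℝ z (B i) : ℝ) = 0)
    {r s0 : ℝ} (hr : 0 < r) (hs0 : 0 < s0) (hs0h : s0 ≤ 1 / 2) (hs0r : s0 ≤ r / 2) :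
    {c : Fin n → ℝ | (∑ i, c i ^ 2) < s0 ^ 2 ∧ 0 ≤ ∑ i, c i * (B i (Fin.last n))} ⊆
      (fun (x : Euc n) (i : Fin n) => (inner ℝ (B i) x : ℝ)) ''
        (Metric.ball z r ∩ upperHemi n) := by
  rintro c ⟨hc1, hc2⟩
  have hs2nn : (0:ℝ) ≤ ∑ i, c i ^ 2 := Finset.sum_nonneg fun i _ => sq_nonneg _
  have hs2le : (∑ i, c i ^ 2) < 1 := lt_of_lt_of_le hc1 (r4 hs0 hs0h)
  have hwB : ∀ j, (inner ℝ (B j) (∑ i, c i • B i) : ℝ) = c j := fun j =>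
    hB.inner_right_fintype c j
  have hzw : (inner ℝ z (∑ i, c i • B i) : ℝ) = 0 := by
    rw [inner_sum]
    simp only [real_inner_smul_right]
    exact Finset.sum_eq_zero fun i _ => by rw [hzB i, mul_zero]
  have hwn : ‖∑ i, c i • B i‖ ^ 2 = ∑ i, c i ^ 2 := by
    rw [← real_inner_self_eq_norm_sq, sum_inner]
    simp only [real_inner_smul_left]
    exact Finset.sum_congr rfl fun i _ => by rw [hwB i]; ring
  have hwlast : (∑ i, c i • B i) (Fin.last n) = ∑ i, c i * (B i (Fin.last n)) := by
    rw [last_coord (∑ i, c i • B i), sum_inner]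
    exact Finset.sum_congr rfl fun i _ => by
      rw [real_inner_smul_left, ← last_coord (B i)]
  obtain ⟨t, htdef⟩ : ∃ t : ℝ, t = Real.sqrt (1 - ∑ i, c i ^ 2) := ⟨_, rfl⟩
  have ht0 : 0 ≤ t := htdef ▸ Real.sqrt_nonneg _
  have ht2 : t ^ 2 = 1 - ∑ i, c i ^ 2 := by rw [htdef]; exact Real.sq_sqrt (by linarith)
  have ht1 : t ≤ 1 := by
    calc t = Real.sqrt (1 - ∑ i, c i ^ 2) := htdef
      _ ≤ Real.sqrt 1 := Real.sqrt_le_sqrt (by linarith)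
      _ = 1 := Real.sqrt_one
  have htge : 1 - (∑ i, c i ^ 2) ≤ t := r0 ht2 ht0 ht1
  refine ⟨t • z + ∑ i, c i • B i, ⟨?_, ?_, ?_⟩, ?_⟩
  · -- in the ball
    rw [Metric.mem_ball]
    have hd2 : dist (t • z + ∑ i, c i • B i) z ^ 2 = (t - 1) ^ 2 + ∑ i, c i ^ 2 := by
      rw [dist_eq_norm, show t • z + (∑ i, c i • B i) - z = (t - 1) • z + ∑ i, c i • B i by
        rw [sub_smul, one_smul]; abel, aux_norm hz1 hzw, hwn]
    exact r1 dist_nonneg (r3 hd2 ht2) htge hs2nn hc1 hs0r hs0 hr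
  · -- on the sphere
    have h2 : ‖t • z + ∑ i, c i • B i‖ ^ 2 = t ^ 2 + ∑ i, c i ^ 2 := by
      rw [aux_norm hz1 hzw, hwn]
    have : ‖t • z + ∑ i, c i • B i‖ = 1 := r2 h2 ht2 (norm_nonneg _)
    simpa [unitSphere, mem_sphere_iff_norm] using this
  · -- last coordinate nonnegative
    have : (t • z + ∑ i, c i • B i) (Fin.last n)
        = t * z (Fin.last n) + (∑ i, c i • B i) (Fin.last n) := by
      simp [PiLp.add_apply, PiLp.smul_apply, smul_eq_mul]
    rw [this, hwlast]
    positivity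
  · -- maps to c
    funext j
    simp only
    have hBz : (inner ℝ (B j) z : ℝ) = 0 := by rw [real_inner_comm]; exact hzB j
    rw [inner_add_right, real_inner_smul_right, hBz, hwB j]
    ring

set_option maxHeartbeats 1000000 in
lemma cap_pos {n : ℕ} {z : Euc n} (hz : z ∈ upperHemi n) {r : ℝ} (hr : 0 < r) :
    0 < (μH[n] : Measure (Euc n)) (Metric.ball z r ∩ upperHemi n) := by
  classical
  have hz1 : ‖z‖ = 1 := norm_of_hemi hz
  have hz0 : z ≠ 0 := by intro h; rw [h, norm_zero] at hz1; norm_num at hz1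
  haveI : Fact (Module.finrank ℝ (Euc n) = n + 1) := ⟨finrank_euclideanSpace_fin⟩
  obtain ⟨b, hb⟩ : ∃ b : OrthonormalBasis (Fin n) ℝ ((Submodule.span ℝ {z})ᗮ), True :=
    ⟨OrthonormalBasis.fromOrthogonalSpanSingleton (𝕜 := ℝ) n hz0, trivial⟩
  obtain ⟨B, hBdef⟩ : ∃ B : Fin n → Euc n, B = fun i => (b i : Euc n) := ⟨_, rfl⟩
  have hB : Orthonormal ℝ B := by
    rw [orthonormal_iff_ite]
    intro i j
    have := (orthonormal_iff_ite (𝕜 := ℝ)).1 b.orthonormal i j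
    rw [Submodule.coe_inner] at this
    rw [hBdef]
    exact this
  have hzB : ∀ i, (inner ℝ z (B i) : ℝ) = 0 := fun i => by
    rw [hBdef]
    exact (Submodule.mem_orthogonal _ _).1 (b i).2 z (Submodule.mem_span_singleton_self z)
  obtain ⟨s0, hs0def⟩ : ∃ s : ℝ, s = min (r / 2) (1 / 2) := ⟨_, rfl⟩
  have hs0 : 0 < s0 := hs0def ▸ lt_min (by linarith) (by norm_num)
  have hs0half : s0 ≤ 1 / 2 := hs0def ▸ min_le_right _ _
  have hs0r : s0 ≤ r / 2 := hs0def ▸ min_le_left _ _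
  obtain ⟨v, hvdef⟩ : ∃ v : Fin n → ℝ, v = fun i => B i (Fin.last n) := ⟨_, rfl⟩
  obtain ⟨Φ, hΦdef⟩ : ∃ Φ : Euc n → (Fin n → ℝ), Φ = fun x i => (inner ℝ (B i) x : ℝ) := ⟨_, rfl⟩
  have hΦlip : LipschitzWith 1 Φ := by
    apply LipschitzWith.of_dist_le_mul
    intro x y
    rw [NNReal.coe_one, one_mul, dist_pi_le_iff dist_nonneg]
    intro i
    rw [Real.dist_eq]
    have h1 : Φ x i - Φ y i = (inner ℝ (B i) (x - y) : ℝ) := by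
      simp only [hΦdef, inner_sub_right]
    rw [h1]
    calc |(inner ℝ (B i) (x - y) : ℝ)| ≤ ‖B i‖ * ‖x - y‖ := abs_real_inner_le_norm _ _
      _ = dist x y := by rw [hB.1 i, one_mul, dist_eq_norm]
  have hUsub : {c : Fin n → ℝ | (∑ i, c i ^ 2) < s0 ^ 2 ∧ 0 ≤ ∑ i, c i * v i} ⊆
      Φ '' (Metric.ball z r ∩ upperHemi n) := by
    rw [hΦdef, hvdef]
    exact cap_sub hz1 hz.2 hB hzB hr hs0 hs0half hs0r
  -- positivity of the volume of the coordinate set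
  have hUvol : 0 < MeasureTheory.volume
      {c : Fin n → ℝ | (∑ i, c i ^ 2) < s0 ^ 2 ∧ 0 ≤ ∑ i, c i * v i} := by
    rcases eq_or_ne v 0 with hv | hv
    · have hopen : IsOpen {c : Fin n → ℝ | (∑ i, c i ^ 2) < s0 ^ 2} :=
        isOpen_lt (by fun_prop) continuous_const
      have hsub : {c : Fin n → ℝ | (∑ i, c i ^ 2) < s0 ^ 2} ⊆
          {c : Fin n → ℝ | (∑ i, c i ^ 2) < s0 ^ 2 ∧ 0 ≤ ∑ i, c i * v i} := by
        intro c hc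
        refine ⟨hc, ?_⟩
        simp [hv]
      refine lt_of_lt_of_le (hopen.measure_pos _ ⟨0, ?_⟩) (measure_mono hsub)
      simp only [Set.mem_setOf_eq, Pi.zero_apply]
      have : (∑ _i : Fin n, (0:ℝ) ^ 2) = 0 := by simp
      rw [this]
      positivity
    · obtain ⟨j, hj0⟩ := Function.ne_iff.1 hv
      have hj : v j ≠ 0 := by simpa using hj0
      obtain ⟨W, hWdef⟩ : ∃ W : ℝ, W = ∑ i, v i ^ 2 := ⟨_, rfl⟩
      have hW : 0 < W := hWdef ▸
        Finset.sum_pos' (fun i _ => sq_nonneg _)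
          ⟨j, Finset.mem_univ j, lt_of_le_of_ne (sq_nonneg _) (Ne.symm (pow_ne_zero 2 hj))⟩
      obtain ⟨ε, hεdef⟩ : ∃ e : ℝ, e = s0 / (W + 1) := ⟨_, rfl⟩
      have hε : 0 < ε := by rw [hεdef]; positivity
      have hopen : IsOpen {c : Fin n → ℝ | (∑ i, c i ^ 2) < s0 ^ 2 ∧ 0 < ∑ i, c i * v i} := by
        have h1 : Continuous fun c : Fin n → ℝ => ∑ i, c i ^ 2 := by fun_prop
        have h2 : Continuous fun c : Fin n → ℝ => ∑ i, c i * v i := by fun_prop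
        exact (isOpen_lt h1 continuous_const).and (isOpen_lt continuous_const h2)
      have hne : (fun i => ε * v i) ∈
          {c : Fin n → ℝ | (∑ i, c i ^ 2) < s0 ^ 2 ∧ 0 < ∑ i, c i * v i} := by
        constructor
        · show (∑ i, (ε * v i) ^ 2) < s0 ^ 2
          have h1 : (∑ i, (ε * v i) ^ 2) = ε ^ 2 * W := by
            rw [hWdef, Finset.mul_sum]
            exact Finset.sum_congr rfl fun i _ => by ring
          rw [h1, hεdef, div_pow, div_mul_eq_mul_div, div_lt_iff₀ (by positivity)]
          nlinarith [mul_pos hs0 hs0, sq_nonneg W, mul_pos (mul_pos hs0 hs0) hW]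
        · show 0 < ∑ i, (ε * v i) * v i
          have h1 : (∑ i, (ε * v i) * v i) = ε * W := by
            rw [hWdef, Finset.mul_sum]
            exact Finset.sum_congr rfl fun i _ => by ring
          rw [h1]
          positivity
      have hsub : {c : Fin n → ℝ | (∑ i, c i ^ 2) < s0 ^ 2 ∧ 0 < ∑ i, c i * v i} ⊆
          {c : Fin n → ℝ | (∑ i, c i ^ 2) < s0 ^ 2 ∧ 0 ≤ ∑ i, c i * v i} :=
        fun c hc => ⟨hc.1, le_of_lt hc.2⟩
      exact lt_of_lt_of_le (hopen.measure_pos _ ⟨_, hne⟩) (measure_mono hsub)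
  have hpi : (μH[(n : ℝ)] : Measure (Fin n → ℝ)) = MeasureTheory.volume := by
    have hpi0 := MeasureTheory.hausdorffMeasure_pi_real (ι := Fin n)
    simp only [Fintype.card_fin] at hpi0
    exact hpi0
  have himg := hΦlip.hausdorffMeasure_image_le (show (0:ℝ) ≤ (n:ℝ) by positivity)
    (Metric.ball z r ∩ upperHemi n)
  rw [ENNReal.coe_one, ENNReal.one_rpow, one_mul] at himg
  calc (0 : ℝ≥0∞) < MeasureTheory.volume
        {c : Fin n → ℝ | (∑ i, c i ^ 2) < s0 ^ 2 ∧ 0 ≤ ∑ i, c i * v i} := hUvol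
    _ = μH[(n : ℝ)] {c : Fin n → ℝ | (∑ i, c i ^ 2) < s0 ^ 2 ∧ 0 ≤ ∑ i, c i * v i} := by
        rw [hpi]
    _ ≤ μH[(n : ℝ)] (Φ '' (Metric.ball z r ∩ upperHemi n)) := measure_mono hUsub
    _ ≤ μH[(n : ℝ)] (Metric.ball z r ∩ upperHemi n) := himg

end Aux

/-- If `ν` has a (normalized) density `f(d(x,N))` w.r.t. `σ_+`, with `f`
positive and continuous on `[0, π/2]`, and the quadratic-cost optimal transport map `T`
from `σ_+` to `ν` is `1`-Lipschitz for the geodesic distance, then `ν = σ_+`. -/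
theorem stmt0 (n : ℕ) (hn : 2 ≤ n) (f : ℝ → ℝ)
    (hf_cont : ContinuousOn f (Set.Icc 0 (π / 2)))
    (hf_pos : ∀ t ∈ Set.Icc 0 (π / 2), 0 < f t)
    (ν : Measure (Euc n)) [IsProbabilityMeasure ν] (Z : ℝ) (hZ : 0 < Z)
    (hν : ν = (sigmaPlus n).withDensity
      (fun x => ENNReal.ofReal (f (geod x (northPole n)) / Z)))
    (T : Euc n → Euc n) (hT_meas : Measurable T)
    (hT_maps : ∀ x ∈ upperHemi n, T x ∈ upperHemi n)
    (hT_push : Measure.map T (sigmaPlus n) = ν)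
    (hT_opt : ∀ S : Euc n → Euc n, Measurable S → (∀ x ∈ upperHemi n, S x ∈ upperHemi n) →
      Measure.map S (sigmaPlus n) = ν →
      ∫ x, (geod x (T x)) ^ 2 ∂(sigmaPlus n) ≤ ∫ x, (geod x (S x)) ^ 2 ∂(sigmaPlus n))
    (hT_lip : ∀ x ∈ upperHemi n, ∀ y ∈ upperHemi n, geod (T x) (T y) ≤ geod x y) :
    ν = sigmaPlus n := by

  classical
  -- topological facts about the hemisphere
  have hH_eq : upperHemi n = unitSphere n ∩ {x : Euc n | 0 ≤ x (Fin.last n)} := rfl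
  have hH_closed : IsClosed (upperHemi n) := by
    rw [hH_eq]
    exact Metric.isClosed_sphere.inter
      (isClosed_le continuous_const (EuclideanSpace.proj (Fin.last n)).continuous)
  have hH_meas : MeasurableSet (upperHemi n) := hH_closed.measurableSet
  have hH_cpt : IsCompact (upperHemi n) := by
    rw [hH_eq]
    exact (isCompact_sphere 0 1).inter_right
      (isClosed_le continuous_const (EuclideanSpace.proj (Fin.last n)).continuous)
  -- nondegeneracy of σ₊
  have hν1 : ν Set.univ = 1 := measure_univ
  have hσ_ne : sigmaPlus n ≠ 0 := by
    intro h0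
    rw [hν, h0] at hν1
    rw [withDensity_apply _ MeasurableSet.univ, Measure.restrict_univ,
      lintegral_zero_measure] at hν1
    exact zero_ne_one hν1
  have hc0 : (μH[n] : Measure (Euc n)) (upperHemi n) ≠ 0 := by
    intro h
    apply hσ_ne
    unfold sigmaPlus
    rw [Measure.restrict_eq_zero.2 h, smul_zero]
  have hcinf : (μH[n] : Measure (Euc n)) (upperHemi n) ≠ ⊤ := by
    intro h
    apply hσ_ne
    unfold sigmaPlus
    rw [h, ENNReal.inv_top, zero_smul]
  have hσ_apply : ∀ A : Set (Euc n), MeasurableSet A →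
      sigmaPlus n A = ((μH[n] : Measure (Euc n)) (upperHemi n))⁻¹ *
        (μH[n] : Measure (Euc n)) (A ∩ upperHemi n) := by
    intro A hA
    unfold sigmaPlus
    rw [Measure.smul_apply, Measure.restrict_apply hA, smul_eq_mul]
  -- lower bound for the density on the hemisphere
  obtain ⟨t0, ht0mem, ht0min⟩ := isCompact_Icc.exists_isMinOn
    (Set.nonempty_Icc.2 (by positivity)) hf_cont
  have hm : 0 < f t0 := hf_pos t0 ht0mem
  have hgeodN : ∀ x ∈ upperHemi n, geod x (northPole n) ∈ Set.Icc 0 (π / 2) := by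
    intro x hx
    have hinner : (inner ℝ x (northPole n) : ℝ) = x (Fin.last n) := by
      rw [northPole, EuclideanSpace.inner_single_right]
      simp
    constructor
    · exact Real.arccos_nonneg _
    · rw [geod, hinner]
      exact Real.arccos_le_pi_div_two.2 hx.2
  -- positivity of ν on balls centered in the hemisphere
  have hν_ball : ∀ z ∈ upperHemi n, ∀ r : ℝ, 0 < r → 0 < ν (Metric.ball z r) := by
    intro z hz r hr
    rw [hν, withDensity_apply _ measurableSet_ball]
    have h1a : ∫⁻ x in Metric.ball z r ∩ upperHemi n,
        ENNReal.ofReal (f t0 / Z) ∂(sigmaPlus n) ≤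
        ∫⁻ x in Metric.ball z r ∩ upperHemi n,
          ENNReal.ofReal (f (geod x (northPole n)) / Z) ∂(sigmaPlus n) := by
      refine setLIntegral_mono' (measurableSet_ball.inter hH_meas) ?_
      intro x hx
      apply ENNReal.ofReal_le_ofReal
      gcongr
      exact ht0min (hgeodN x hx.2)
    have h1b : ∫⁻ x in Metric.ball z r ∩ upperHemi n,
        ENNReal.ofReal (f (geod x (northPole n)) / Z) ∂(sigmaPlus n) ≤
        ∫⁻ x in Metric.ball z r, ENNReal.ofReal (f (geod x (northPole n)) / Z)
          ∂(sigmaPlus n) :=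
      lintegral_mono' (Measure.restrict_mono Set.inter_subset_left le_rfl) le_rfl
    have h1 := h1a.trans h1b
    rw [setLIntegral_const] at h1
    refine lt_of_lt_of_le ?_ h1
    have h2 : sigmaPlus n (Metric.ball z r ∩ upperHemi n) =
        ((μH[n] : Measure (Euc n)) (upperHemi n))⁻¹ *
          (μH[n] : Measure (Euc n)) (Metric.ball z r ∩ upperHemi n) := by
      rw [hσ_apply _ (measurableSet_ball.inter hH_meas), Set.inter_assoc, Set.inter_self]
    have h3 : (0:ℝ≥0∞) < sigmaPlus n (Metric.ball z r ∩ upperHemi n) := by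
      rw [h2]
      exact ENNReal.mul_pos (ENNReal.inv_ne_zero.2 hcinf) (cap_pos hz hr).ne'
    exact ENNReal.mul_pos (ENNReal.ofReal_pos.2 (by positivity)).ne' h3.ne'
  -- the induced self-map of the compact hemisphere
  haveI : CompactSpace (upperHemi n) := isCompact_iff_compactSpace.1 hH_cpt
  set F : upperHemi n → upperHemi n := fun x => ⟨T x, hT_maps x x.2⟩ with hFdef
  have hFlip : ∀ a b : upperHemi n, dist (F a) (F b) ≤ dist a b := by
    intro a b
    rw [Subtype.dist_eq, Subtype.dist_eq]
    exact dist_le_of_geod_le (norm_of_hemi a.2) (norm_of_hemi b.2)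
      (norm_of_hemi (hT_maps a a.2)) (norm_of_hemi (hT_maps b b.2))
      (hT_lip a a.2 b b.2)
  have hFcont : Continuous F := by
    refine LipschitzWith.continuous (K := 1) ?_
    apply LipschitzWith.of_dist_le_mul
    intro a b
    rw [NNReal.coe_one, one_mul]
    exact hFlip a b
  have hFsurj : Function.Surjective F := by
    intro zs
    by_contra hzr
    push_neg at hzr
    have hznr : zs ∉ Set.range F := by rintro ⟨a, rfl⟩; exact hzr a rfl
    obtain ⟨r, hr, hball⟩ :=
      Metric.isOpen_iff.1 (isCompact_range hFcont).isClosed.isOpen_compl zs hznr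
    have h0 : ν (Metric.ball (zs : Euc n) r) = 0 := by
      rw [← hT_push, Measure.map_apply hT_meas measurableSet_ball,
        hσ_apply _ (hT_meas measurableSet_ball)]
      have hempty : T ⁻¹' Metric.ball (zs : Euc n) r ∩ upperHemi n = ∅ := by
        ext x
        simp only [Set.mem_inter_iff, Set.mem_preimage, Metric.mem_ball, Set.mem_empty_iff_false,
          iff_false, not_and]
        intro hbx hxH
        have hmem : F ⟨x, hxH⟩ ∈ Metric.ball zs r := by
          rw [Metric.mem_ball, Subtype.dist_eq]
          exact hbx
        exact hball hmem ⟨⟨x, hxH⟩, rfl⟩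
      rw [hempty, measure_empty, mul_zero]
    exact absurd h0 (hν_ball zs.1 zs.2 r hr).ne'
  have hFiso : ∀ a b, dist (F a) (F b) = dist a b := lipschitz_surj_isometry hFsurj hFlip
  have hFinj : Function.Injective F := by
    intro a b hab
    have h := hFiso a b
    rw [hab, dist_self] at h
    exact eq_of_dist_eq_zero h.symm
  set E := Equiv.ofBijective F ⟨hFinj, hFsurj⟩ with hEdef
  have hEF : ∀ a, E a = F a := fun a => rfl
  set g : Euc n → Euc n := fun y =>
    if h : y ∈ upperHemi n then (E.symm ⟨y, h⟩ : Euc n) else y with hgdef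
  have hg_mem : ∀ y ∈ upperHemi n, g y ∈ upperHemi n := by
    intro y hy
    simp only [hgdef, dif_pos hy]
    exact (E.symm ⟨y, hy⟩).2
  have hgT : ∀ y ∈ upperHemi n, T (g y) = y := by
    intro y hy
    simp only [hgdef, dif_pos hy]
    have h1 : F (E.symm ⟨y, hy⟩) = ⟨y, hy⟩ := by
      rw [← hEF]
      exact E.apply_symm_apply ⟨y, hy⟩
    exact congrArg Subtype.val h1
  have hTg : ∀ x ∈ upperHemi n, g (T x) = x := by
    intro x hx
    have hTx : T x ∈ upperHemi n := hT_maps x hx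
    simp only [hgdef, dif_pos hTx]
    have h1 : (⟨T x, hTx⟩ : upperHemi n) = F ⟨x, hx⟩ := rfl
    rw [h1, ← hEF, Equiv.symm_apply_apply]
  have hg_iso : ∀ a ∈ upperHemi n, ∀ b ∈ upperHemi n, dist (g a) (g b) = dist a b := by
    intro a ha b hb
    have h := hFiso (E.symm ⟨a, ha⟩) (E.symm ⟨b, hb⟩)
    have h1 : F (E.symm ⟨a, ha⟩) = ⟨a, ha⟩ := by rw [← hEF]; exact E.apply_symm_apply _
    have h2 : F (E.symm ⟨b, hb⟩) = ⟨b, hb⟩ := by rw [← hEF]; exact E.apply_symm_apply _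
    rw [h1, h2, Subtype.dist_eq, Subtype.dist_eq] at h
    simp only [hgdef, dif_pos ha, dif_pos hb]
    exact h.symm
  -- Lipschitz-on-set facts in the ambient space
  have hT_liponH : LipschitzOnWith 1 T (upperHemi n) := by
    rw [lipschitzOnWith_iff_dist_le_mul]
    intro x hx y hy
    rw [NNReal.coe_one, one_mul]
    exact dist_le_of_geod_le (norm_of_hemi hx) (norm_of_hemi hy)
      (norm_of_hemi (hT_maps x hx)) (norm_of_hemi (hT_maps y hy)) (hT_lip x hx y hy)
  have hg_liponH : LipschitzOnWith 1 g (upperHemi n) := by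
    rw [lipschitzOnWith_iff_dist_le_mul]
    intro x hx y hy
    rw [NNReal.coe_one, one_mul, hg_iso x hx y hy]
  -- the key measure identity
  have hmain : ∀ A : Set (Euc n), MeasurableSet A →
      (μH[n] : Measure (Euc n)) (T ⁻¹' A ∩ upperHemi n) =
        (μH[n] : Measure (Euc n)) (A ∩ upperHemi n) := by
    intro A hA
    have h1 : g '' (A ∩ upperHemi n) = T ⁻¹' A ∩ upperHemi n := by
      ext x
      constructor
      · rintro ⟨y, ⟨hyA, hyH⟩, rfl⟩
        exact ⟨by rw [Set.mem_preimage, hgT y hyH]; exact hyA, hg_mem y hyH⟩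
      · rintro ⟨hxA, hxH⟩
        exact ⟨T x, ⟨hxA, hT_maps x hxH⟩, hTg x hxH⟩
    have h2 : T '' (T ⁻¹' A ∩ upperHemi n) = A ∩ upperHemi n := by
      ext y
      constructor
      · rintro ⟨x, ⟨hxA, hxH⟩, rfl⟩
        exact ⟨hxA, hT_maps x hxH⟩
      · rintro ⟨hyA, hyH⟩
        exact ⟨g y, ⟨by rw [Set.mem_preimage, hgT y hyH]; exact hyA, hg_mem y hyH⟩, hgT y hyH⟩
    have hd : (0:ℝ) ≤ n := by positivity
    have hle1 : (μH[n] : Measure (Euc n)) (T ⁻¹' A ∩ upperHemi n) ≤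
        (μH[n] : Measure (Euc n)) (A ∩ upperHemi n) := by
      rw [← h1]
      have := (hg_liponH.mono (Set.inter_subset_right (s := A))).hausdorffMeasure_image_le hd
      rwa [ENNReal.coe_one, ENNReal.one_rpow, one_mul] at this
    have hle2 : (μH[n] : Measure (Euc n)) (A ∩ upperHemi n) ≤
        (μH[n] : Measure (Euc n)) (T ⁻¹' A ∩ upperHemi n) := by
      rw [← h2]
      have := (hT_liponH.mono (Set.inter_subset_right (s := T ⁻¹' A))).hausdorffMeasure_image_le hd
      rwa [ENNReal.coe_one, ENNReal.one_rpow, one_mul] at this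
    exact le_antisymm hle1 hle2
  -- conclusion
  rw [← hT_push]
  ext A hA
  rw [Measure.map_apply hT_meas hA, hσ_apply _ (hT_meas hA), hσ_apply _ hA, hmain A hA]

end
end

section
/- (Valentine) Let n ≥ 1, let A be a compact subset of the unit sphere S^n, and let T : A → S^n be a map that is 1-Lipschitz with respect to the geodesic distance d. If the image T(A) is not contained in any closed hemisphere (i.e., there is no v ∈ S^n such that v·T(x) ≥ 0 for all x ∈ A), then T is an isometry: d(T(x), T(y)) = d(x,y) for all x, y ∈ A. -/
open MeasureTheory Real

noncomputable section

lemma inner_Icc {n : ℕ} {x y : Euc n} (hx : x ∈ unitSphere n) (hy : y ∈ unitSphere n) :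
    -1 ≤ (inner ℝ x y : ℝ) ∧ (inner ℝ x y : ℝ) ≤ 1 := by
  rw [unitSphere, mem_sphere_zero_iff_norm] at hx hy
  have h := abs_real_inner_le_norm x y
  rw [hx, hy, one_mul] at h
  constructor
  · linarith [neg_abs_le (inner ℝ x y : ℝ)]
  · linarith [le_abs_self (inner ℝ x y : ℝ)]

lemma inner_mono {n : ℕ} {A : Set (Euc n)} {T : Euc n → Euc n}
    (hA_sub : A ⊆ unitSphere n)
    (hT_maps : ∀ x ∈ A, T x ∈ unitSphere n)
    (hT_lip : ∀ x ∈ A, ∀ y ∈ A, geod (T x) (T y) ≤ geod x y)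
    {x y : Euc n} (hx : x ∈ A) (hy : y ∈ A) :
    (inner ℝ x y : ℝ) ≤ (inner ℝ (T x) (T y) : ℝ) := by
  have h1 := inner_Icc (hA_sub hx) (hA_sub hy)
  have h2 := inner_Icc (hT_maps x hx) (hT_maps y hy)
  have hcos : Real.cos (geod x y) ≤ Real.cos (geod (T x) (T y)) := by
    apply Real.cos_le_cos_of_nonneg_of_le_pi (Real.arccos_nonneg _) (Real.arccos_le_pi _)
    exact hT_lip x hx y hy
  rwa [geod, geod, Real.cos_arccos h1.1 h1.2, Real.cos_arccos h2.1 h2.2] at hcos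

/-- Key rigidity lemma: if `ε • T x + ∑ wᵢ • T pᵢ = 0` with positive `ε`, nonneg `wᵢ`,
all points in `A`, then `T` preserves inner products against `x`. -/
lemma key {n : ℕ} {A : Set (Euc n)} {T : Euc n → Euc n}
    (hA_sub : A ⊆ unitSphere n)
    (hT_maps : ∀ x ∈ A, T x ∈ unitSphere n)
    (hT_lip : ∀ x ∈ A, ∀ y ∈ A, geod (T x) (T y) ≤ geod x y)
    {ι : Type} (t : Finset ι) (w : ι → ℝ) (p : ι → Euc n)
    (hw : ∀ i ∈ t, 0 ≤ w i) (hp : ∀ i ∈ t, p i ∈ A)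
    {x : Euc n} (hx : x ∈ A) {ε : ℝ} (hε : 0 < ε)
    (hsum : ε • T x + ∑ i ∈ t, w i • T (p i) = 0) :
    ∀ a ∈ A, (inner ℝ (T a) (T x) : ℝ) = (inner ℝ a x : ℝ) := by
  -- expansion of inner against the relation
  have hexp : ∀ a : Euc n,
      ε * (inner ℝ a (T x) : ℝ) + ∑ i ∈ t, w i * (inner ℝ a (T (p i)) : ℝ) = 0 := by
    intro a
    have h0 : (inner ℝ a (ε • T x + ∑ i ∈ t, w i • T (p i)) : ℝ) = 0 := by
      rw [hsum, inner_zero_right]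
    rw [inner_add_right, real_inner_smul_right, inner_sum] at h0
    simp only [real_inner_smul_right] at h0; exact h0
  -- step 1 : for a ∈ A, inner a q ≤ 0 where q = ε•x + ∑ wᵢ•pᵢ
  set q : Euc n := ε • x + ∑ i ∈ t, w i • p i with hq
  have hqexp : ∀ a : Euc n,
      (inner ℝ a q : ℝ) = ε * (inner ℝ a x : ℝ) + ∑ i ∈ t, w i * (inner ℝ a (p i) : ℝ) := by
    intro a
    rw [hq, inner_add_right, real_inner_smul_right, inner_sum]
    simp only [real_inner_smul_right]
  have step1 : ∀ a ∈ A, (inner ℝ a q : ℝ) ≤ 0 := by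
    intro a ha
    rw [hqexp]
    have hTa := hexp (T a)
    have h1 : ε * (inner ℝ a x : ℝ) ≤ ε * (inner ℝ (T a) (T x) : ℝ) :=
      mul_le_mul_of_nonneg_left (inner_mono hA_sub hT_maps hT_lip ha hx) hε.le
    have h2 : ∑ i ∈ t, w i * (inner ℝ a (p i) : ℝ)
        ≤ ∑ i ∈ t, w i * (inner ℝ (T a) (T (p i)) : ℝ) := by
      apply Finset.sum_le_sum
      intro i hi
      exact mul_le_mul_of_nonneg_left
        (inner_mono hA_sub hT_maps hT_lip ha (hp i hi)) (hw i hi)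
    linarith
  -- step 2 : q = 0
  have hq0 : q = 0 := by
    apply real_inner_self_nonpos.1
    have : (inner ℝ q q : ℝ) = ε * (inner ℝ x q : ℝ) + ∑ i ∈ t, w i * (inner ℝ (p i) q : ℝ) := by
      rw [hq]
      conv_lhs => rw [inner_add_left, real_inner_smul_left, sum_inner]
      simp only [real_inner_smul_left]
    rw [this]
    have h1 : ε * (inner ℝ x q : ℝ) ≤ 0 :=
      mul_nonpos_of_nonneg_of_nonpos hε.le (step1 x hx)
    have h2 : ∑ i ∈ t, w i * (inner ℝ (p i) q : ℝ) ≤ 0 := by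
      apply Finset.sum_nonpos
      intro i hi
      exact mul_nonpos_of_nonneg_of_nonpos (hw i hi) (step1 (p i) (hp i hi))
    linarith
  -- step 3 : equality
  intro a ha
  have e1 := hexp (T a)
  have e2 : ε * (inner ℝ a x : ℝ) + ∑ i ∈ t, w i * (inner ℝ a (p i) : ℝ) = 0 := by
    rw [← hqexp a, hq0, inner_zero_right]
  have hsum0 : ε * ((inner ℝ (T a) (T x) : ℝ) - (inner ℝ a x : ℝ))
      + ∑ i ∈ t, w i * ((inner ℝ (T a) (T (p i)) : ℝ) - (inner ℝ a (p i) : ℝ)) = 0 := by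
    have : ∑ i ∈ t, w i * ((inner ℝ (T a) (T (p i)) : ℝ) - (inner ℝ a (p i) : ℝ))
        = ∑ i ∈ t, w i * (inner ℝ (T a) (T (p i)) : ℝ)
          - ∑ i ∈ t, w i * (inner ℝ a (p i) : ℝ) := by
      rw [← Finset.sum_sub_distrib]; apply Finset.sum_congr rfl; intros; ring
    rw [this]; linarith
  have hterm : 0 ≤ ∑ i ∈ t, w i * ((inner ℝ (T a) (T (p i)) : ℝ) - (inner ℝ a (p i) : ℝ)) := by
    apply Finset.sum_nonneg
    intro i hi
    exact mul_nonneg (hw i hi)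
      (sub_nonneg.2 (inner_mono hA_sub hT_maps hT_lip ha (hp i hi)))
  have hd : 0 ≤ (inner ℝ (T a) (T x) : ℝ) - (inner ℝ a x : ℝ) :=
    sub_nonneg.2 (inner_mono hA_sub hT_maps hT_lip ha hx)
  nlinarith

lemma exists_hemi {n : ℕ} {S : Set (Euc n)} (hne : S.Nonempty)
    (h0 : (0 : Euc n) ∉ interior (convexHull ℝ S)) :
    ∃ v : Euc n, ‖v‖ = 1 ∧ ∀ p ∈ S, 0 ≤ (inner ℝ v p : ℝ) := by
  by_cases hspan : affineSpan ℝ S = ⊤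
  · have hC : Convex ℝ (convexHull ℝ S) := convex_convexHull ℝ S
    have hint : (interior (convexHull ℝ S)).Nonempty := by
      rw [hC.interior_nonempty_iff_affineSpan_eq_top, affineSpan_convexHull]; exact hspan
    obtain ⟨f, hf⟩ := geometric_hahn_banach_open_point hC.interior isOpen_interior h0
    have hf0 : ∀ a ∈ interior (convexHull ℝ S), f a < 0 := by
      intro a ha; have := hf a ha; simpa using this
    obtain ⟨a₀, ha₀⟩ := hint
    have ha₀0 : f a₀ < 0 := hf0 _ ha₀
    have hfneg : ∀ p ∈ convexHull ℝ S, f p ≤ 0 := by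
      intro p hp
      by_contra hfp
      push_neg at hfp
      set t₀ : ℝ := (-f a₀) / (f p - f a₀) with ht₀def
      have hden : (0:ℝ) < f p - f a₀ := by linarith
      have ht₀pos : 0 < t₀ := div_pos (by linarith) hden
      have ht₀lt : t₀ < 1 := by rw [ht₀def, div_lt_one hden]; linarith
      have ht₀g : t₀ * (f p - f a₀) = -f a₀ := by
        rw [ht₀def]; field_simp
      have hmem : ((1 - t₀)/2) • a₀ + ((1 + t₀)/2) • p ∈ interior (convexHull ℝ S) :=
        hC.combo_interior_self_mem_interior ha₀ hp (by linarith) (by linarith) (by ring)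
      have hlt := hf0 _ hmem
      rw [map_add, f.map_smul, f.map_smul] at hlt
      simp only [smul_eq_mul] at hlt
      nlinarith [hlt, ht₀g, hfp, ha₀0]
    set v0 : Euc n := -((InnerProductSpace.toDual ℝ (Euc n)).symm f) with hv0def
    have hinner : ∀ p : Euc n, (inner ℝ v0 p : ℝ) = -f p := by
      intro p
      rw [hv0def, inner_neg_left, InnerProductSpace.toDual_symm_apply]
    have hv0ne : v0 ≠ 0 := by
      intro h
      have := hinner a₀
      rw [h, inner_zero_left] at this
      linarith
    refine ⟨‖v0‖⁻¹ • v0, ?_, ?_⟩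
    · rw [norm_smul, norm_inv, norm_norm, inv_mul_cancel₀ (norm_ne_zero_iff.2 hv0ne)]
    · intro p hp
      rw [real_inner_smul_left, hinner]
      have h1 : f p ≤ 0 := hfneg p (subset_convexHull ℝ S hp)
      have h2 : (0:ℝ) ≤ ‖v0‖⁻¹ := by positivity
      nlinarith
  · obtain ⟨p₀, hp₀⟩ := hne
    have hd : (affineSpan ℝ S).direction ≠ ⊤ := by
      intro hd
      exact hspan ((AffineSubspace.direction_eq_top_iff_of_nonempty
        ((affineSpan_nonempty ℝ).2 ⟨p₀, hp₀⟩)).1 hd)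
    have hbot : (affineSpan ℝ S).directionᗮ ≠ ⊥ := by
      rwa [ne_eq, Submodule.orthogonal_eq_bot_iff]
    obtain ⟨v1, hv1mem, hv1ne⟩ := Submodule.exists_mem_ne_zero_of_ne_bot hbot
    have hconst : ∀ p ∈ S, (inner ℝ v1 p : ℝ) = (inner ℝ v1 p₀ : ℝ) := by
      intro p hp
      have hsub : p - p₀ ∈ (affineSpan ℝ S).direction := by
        have := AffineSubspace.vsub_mem_direction
          (subset_affineSpan ℝ S hp) (subset_affineSpan ℝ S hp₀)
        rwa [vsub_eq_sub] at this
      have h0' : (inner ℝ (p - p₀) v1 : ℝ) = 0 :=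
        (Submodule.mem_orthogonal _ v1).1 hv1mem _ hsub
      rw [real_inner_comm] at h0'
      rw [inner_sub_right] at h0'
      linarith
    rcases le_or_gt 0 (inner ℝ v1 p₀ : ℝ) with hc | hc
    · refine ⟨‖v1‖⁻¹ • v1, ?_, ?_⟩
      · rw [norm_smul, norm_inv, norm_norm, inv_mul_cancel₀ (norm_ne_zero_iff.2 hv1ne)]
      · intro p hp
        rw [real_inner_smul_left, hconst p hp]
        have : (0:ℝ) ≤ ‖v1‖⁻¹ := by positivity
        nlinarith
    · refine ⟨-(‖v1‖⁻¹ • v1), ?_, ?_⟩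
      · rw [norm_neg, norm_smul, norm_inv, norm_norm, inv_mul_cancel₀ (norm_ne_zero_iff.2 hv1ne)]
      · intro p hp
        rw [inner_neg_left, real_inner_smul_left, hconst p hp]
        have : (0:ℝ) ≤ ‖v1‖⁻¹ := by positivity
        nlinarith

/-- **Valentine.** A `1`-Lipschitz map (for the geodesic distance) defined on a
compact subset of the sphere whose image is not contained in any closed hemisphere is an
isometry. -/
theorem stmt2 (n : ℕ) (hn : 1 ≤ n) (A : Set (Euc n)) (hA_cpt : IsCompact A)
    (hA_sub : A ⊆ unitSphere n) (T : Euc n → Euc n)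
    (hT_maps : ∀ x ∈ A, T x ∈ unitSphere n)
    (hT_lip : ∀ x ∈ A, ∀ y ∈ A, geod (T x) (T y) ≤ geod x y)
    (h_hemi : ¬ ∃ v ∈ unitSphere n, ∀ x ∈ A, 0 ≤ (inner ℝ v (T x) : ℝ)) :
    ∀ x ∈ A, ∀ y ∈ A, geod (T x) (T y) = geod x y := by
  classical
  have hAne : A.Nonempty := by
    by_contra hA
    apply h_hemi
    refine ⟨EuclideanSpace.single (Fin.last n) 1, ?_, ?_⟩
    · rw [unitSphere, mem_sphere_zero_iff_norm, EuclideanSpace.norm_single]; norm_num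
    · intro x hx; exact absurd ⟨x, hx⟩ hA
  have hSne : (T '' A).Nonempty := hAne.image T
  have h0 : (0 : Euc n) ∈ interior (convexHull ℝ (T '' A)) := by
    by_contra h0
    obtain ⟨v, hv1, hv2⟩ := exists_hemi hSne h0
    exact h_hemi ⟨v, by rwa [unitSphere, mem_sphere_zero_iff_norm],
      fun x hx => hv2 _ ⟨x, hx, rfl⟩⟩
  have main : ∀ x ∈ A, ∀ a ∈ A, (inner ℝ (T a) (T x) : ℝ) = (inner ℝ a x : ℝ) := by
    intro x hx
    obtain ⟨ε, hε, hball⟩ := Metric.mem_nhds_iff.1 (mem_interior_iff_mem_nhds.1 h0)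
    have hu : -((ε/2) • T x) ∈ convexHull ℝ (T '' A) := by
      apply hball
      rw [Metric.mem_ball, dist_zero_right]
      have hTx : ‖T x‖ = 1 := by
        have := hT_maps x hx; rwa [unitSphere, mem_sphere_zero_iff_norm] at this
      rw [norm_neg, norm_smul, hTx, mul_one, Real.norm_eq_abs, abs_of_pos (by linarith)]
      linarith
    rw [convexHull_eq] at hu
    obtain ⟨ι, t, w, z, hw0, hw1, hzS, hcm⟩ := hu
    rw [Finset.centerMass_eq_of_sum_1 _ _ hw1] at hcm
    set p : ι → Euc n := fun i => if h : ∃ a, a ∈ A ∧ T a = z i then h.choose else x with hpdef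
    have hpA : ∀ i ∈ t, p i ∈ A := by
      intro i hi
      obtain ⟨a, ha, hTa⟩ := hzS i hi
      have hex : ∃ a, a ∈ A ∧ T a = z i := ⟨a, ha, hTa⟩
      simp only [hpdef, dif_pos hex]
      exact hex.choose_spec.1
    have hTp : ∀ i ∈ t, T (p i) = z i := by
      intro i hi
      obtain ⟨a, ha, hTa⟩ := hzS i hi
      have hex : ∃ a, a ∈ A ∧ T a = z i := ⟨a, ha, hTa⟩
      simp only [hpdef, dif_pos hex]
      exact hex.choose_spec.2
    have hsum : (ε/2) • T x + ∑ i ∈ t, w i • T (p i) = 0 := by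
      have hzz : ∑ i ∈ t, w i • T (p i) = ∑ i ∈ t, w i • z i :=
        Finset.sum_congr rfl fun i hi => by rw [hTp i hi]
      rw [hzz, hcm]
      simp
    exact key hA_sub hT_maps hT_lip t w p hw0 hpA hx (by linarith) hsum
  intro x hx y hy
  have h := main x hx y hy
  rw [geod, geod, ← real_inner_comm (T x) (T y), h, real_inner_comm x y]

end
end

section
/- Let n ≥ 2 and let ν be a probability measure on S^n_+ with full support (i.e., the support of ν equals S^n_+), and suppose ν ≠ σ_+. Then there is no injective map T : S^n_+ → S^n_+ that is 1-Lipschitz with respect to the geodesic distance and satisfies T_#σ_+ = ν. -/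
open MeasureTheory Real Set
open scoped NNReal ENNReal

noncomputable section

namespace Stmt5Aux

variable {n : ℕ}

lemma coord_le_norm (z : Euc n) (j : Fin (n + 1)) : |z j| ≤ ‖z‖ := by
  rw [EuclideanSpace.norm_eq]
  have : |z j| = Real.sqrt (z j ^ 2) := by
    rw [Real.sqrt_sq_eq_abs]
  rw [this]
  apply Real.sqrt_le_sqrt
  have : |z j| ^ 2 ≤ ∑ i, ‖z i‖ ^ 2 := by
    have := Finset.single_le_sum (f := fun i : Fin (n+1) => ‖z i‖ ^ 2)
      (fun i _ => sq_nonneg _) (Finset.mem_univ j)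
    simpa [Real.norm_eq_abs] using this
  simpa [sq_abs] using this

lemma norm_of_mem_hemi {x : Euc n} (hx : x ∈ upperHemi n) : ‖x‖ = 1 := by
  have := hx.1
  simpa [unitSphere, mem_sphere_zero_iff_norm] using this

lemma isClosed_hemi : IsClosed (upperHemi n) := by
  have h1 : IsClosed (unitSphere n) := Metric.isClosed_sphere
  have h2 : IsClosed {x : Euc n | 0 ≤ x (Fin.last n)} :=
    isClosed_le continuous_const (EuclideanSpace.proj (𝕜 := ℝ) (Fin.last n)).continuous
  exact h1.inter h2

lemma isCompact_hemi : IsCompact (upperHemi n) := by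
  have hb : Bornology.IsBounded (upperHemi n) := by
    apply Metric.isBounded_iff_subset_closedBall (0 : Euc n) |>.2
    exact ⟨1, fun x hx => by simp [Metric.mem_closedBall, dist_zero_right, norm_of_mem_hemi hx]⟩
  exact Metric.isCompact_of_isClosed_isBounded isClosed_hemi hb

lemma measurableSet_hemi : MeasurableSet (upperHemi n) := isClosed_hemi.measurableSet

end Stmt5Aux

namespace Stmt5Aux

variable {n : ℕ}

abbrev Psp (n : ℕ) := Fin (n + 1) → ℝ
abbrev Pn (n : ℕ) := Fin n → ℝ

lemma lipschitz_ins (i : Fin (n+1)) (c : ℝ) :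
    LipschitzWith 1 (fun u : Pn n => (i.insertNth c u : Psp n)) := by
  apply LipschitzWith.of_dist_le_mul
  intro u v
  rw [NNReal.coe_one, one_mul, dist_pi_le_iff dist_nonneg]
  intro j
  by_cases hj : j = i
  · subst hj
    rw [Fin.insertNth_apply_same, Fin.insertNth_apply_same, dist_self]
    exact dist_nonneg
  · obtain ⟨k, rfl⟩ := Fin.exists_succAbove_eq hj
    simp only [Fin.insertNth_apply_succAbove]
    exact dist_le_pi_dist u v k

lemma muH_pi_n_eq_volume : (μH[(n : ℝ)] : Measure (Pn n)) = volume := by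
  have := MeasureTheory.hausdorffMeasure_pi_real (ι := Fin n)
  simpa [Fintype.card_fin] using this

lemma sup_sphere_subset :
    Metric.sphere (0 : Psp n) 1 ⊆
      ⋃ p : Fin (n+1) × Bool,
        (fun u : Pn n => (p.1.insertNth (if p.2 then (1:ℝ) else -1) u : Psp n)) ''
          Metric.closedBall (0 : Pn n) 1 := by
  intro v hv
  have hnorm : ‖v‖ = 1 := by simpa using hv
  obtain ⟨i, -, hi⟩ := Finset.exists_mem_eq_sup (Finset.univ : Finset (Fin (n+1)))
    Finset.univ_nonempty (fun i => ‖v i‖₊)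
  have hvi : |v i| = 1 := by
    have : ‖v‖₊ = ‖v i‖₊ := by
      rw [Pi.nnnorm_def]; exact hi
    have h2 : ‖v‖ = ‖v i‖ := congrArg NNReal.toReal this
    rw [hnorm] at h2
    simpa [Real.norm_eq_abs] using h2.symm
  set u : Pn n := fun k => v (i.succAbove k) with hu
  have hins : (i.insertNth (v i) u : Psp n) = v := by
    funext j
    by_cases hj : j = i
    · subst hj; simp [Fin.insertNth_apply_same]
    · obtain ⟨k, rfl⟩ := Fin.exists_succAbove_eq hj
      simp [Fin.insertNth_apply_succAbove, hu]
  have humem : u ∈ Metric.closedBall (0 : Pn n) 1 := by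
    rw [Metric.mem_closedBall, dist_zero_right]
    apply pi_norm_le_iff_of_nonneg zero_le_one |>.2
    intro k
    calc ‖u k‖ = ‖v (i.succAbove k)‖ := rfl
    _ ≤ ‖v‖ := norm_le_pi_norm v _
    _ = 1 := hnorm
  rcases (abs_eq zero_le_one).1 hvi with h | h
  · refine mem_iUnion.2 ⟨⟨i, true⟩, ⟨u, humem, ?_⟩⟩
    simpa [h] using hins
  · refine mem_iUnion.2 ⟨⟨i, false⟩, ⟨u, humem, ?_⟩⟩
    simpa [h] using hins

lemma muH_sup_sphere_lt_top : (μH[(n : ℝ)] : Measure (Psp n)) (Metric.sphere 0 1) < ⊤ := by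
  apply lt_of_le_of_lt (measure_mono sup_sphere_subset)
  apply lt_of_le_of_lt (measure_iUnion_le _)
  have hbound : ∀ p : Fin (n+1) × Bool,
      (μH[(n : ℝ)] : Measure (Psp n))
        ((fun u : Pn n => (p.1.insertNth (if p.2 then (1:ℝ) else -1) u : Psp n)) ''
          Metric.closedBall (0 : Pn n) 1) < ⊤ := by
    intro p
    have hle := (lipschitz_ins p.1 (if p.2 then (1:ℝ) else -1)).hausdorffMeasure_image_le
      (d := (n : ℝ)) (Nat.cast_nonneg n) (Metric.closedBall (0 : Pn n) 1)
    apply lt_of_le_of_lt hle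
    rw [muH_pi_n_eq_volume]
    simp only [ENNReal.coe_one, ENNReal.one_rpow, one_mul]
    exact measure_closedBall_lt_top
  rw [tsum_fintype]
  exact ENNReal.sum_lt_top.mpr fun p _ => hbound p

/-- the sup-norm unit sphere viewed inside `Euc n` -/
def supSphere (n : ℕ) : Set (Euc n) :=
  (WithLp.equiv 2 (Psp n)) ⁻¹' (Metric.sphere (0 : Psp n) 1)

lemma muH_supSphere_lt_top : (μH[(n : ℝ)] : Measure (Euc n)) (supSphere n) < ⊤ := by
  obtain ⟨C, hC⟩ : ∃ C : ℝ≥0, AntilipschitzWith C (WithLp.equiv 2 (∀ _ : Fin (n+1), ℝ)) :=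
    ⟨_, PiLp.antilipschitzWith_ofLp 2 _⟩
  have hsym : LipschitzWith C ((WithLp.equiv 2 (∀ _ : Fin (n+1), ℝ)).symm) :=
    hC.to_rightInverse (WithLp.equiv 2 _).apply_symm_apply
  have himg : supSphere n =
      (WithLp.equiv 2 (∀ _ : Fin (n+1), ℝ)).symm '' (Metric.sphere (0 : Psp n) 1) := by
    rw [Equiv.image_eq_preimage_symm]
    rfl
  rw [himg]
  apply lt_of_le_of_lt (hsym.hausdorffMeasure_image_le (Nat.cast_nonneg n) _)
  exact ENNReal.mul_lt_top (ENNReal.rpow_lt_top_of_nonneg (Nat.cast_nonneg n)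
    ENNReal.coe_ne_top) muH_sup_sphere_lt_top

lemma norm_le_of_supSphere {v : Euc n} (hv : v ∈ supSphere n) : 1 ≤ ‖v‖ := by
  have h1 : ‖WithLp.equiv 2 (Psp n) v‖ = 1 := by
    simpa [supSphere] using hv
  rw [← h1]
  apply pi_norm_le_iff_of_nonneg (norm_nonneg v) |>.2
  intro i
  simpa using coord_le_norm v i

lemma normalize_lip {v w : Euc n} (hv : 1 ≤ ‖v‖) (hw : 1 ≤ ‖w‖) :
    dist (‖v‖⁻¹ • v) (‖w‖⁻¹ • w) ≤ 2 * dist v w := by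
  have hv0 : (0:ℝ) < ‖v‖ := lt_of_lt_of_le one_pos hv
  have hw0 : (0:ℝ) < ‖w‖ := lt_of_lt_of_le one_pos hw
  have key : ‖(‖v‖⁻¹ • v) - (‖w‖⁻¹ • w)‖ ≤ 2 * ‖v - w‖ := by
    have h1 : ‖(‖v‖⁻¹ • v) - (‖w‖⁻¹ • w)‖ ≤
        ‖(‖v‖⁻¹ • v) - (‖v‖⁻¹ • w)‖ + ‖(‖v‖⁻¹ • w) - (‖w‖⁻¹ • w)‖ :=
      norm_sub_le_norm_sub_add_norm_sub _ _ _
    have h2 : ‖(‖v‖⁻¹ • v) - (‖v‖⁻¹ • w)‖ = ‖v‖⁻¹ * ‖v - w‖ := by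
      rw [← smul_sub, norm_smul, Real.norm_eq_abs, abs_of_pos (by positivity)]
    have h3 : ‖(‖v‖⁻¹ • w) - (‖w‖⁻¹ • w)‖ = |‖v‖⁻¹ - ‖w‖⁻¹| * ‖w‖ := by
      rw [← sub_smul, norm_smul, Real.norm_eq_abs]
    have h4 : |‖v‖⁻¹ - ‖w‖⁻¹| * ‖w‖ ≤ ‖v - w‖ := by
      have : |‖v‖⁻¹ - ‖w‖⁻¹| = |‖w‖ - ‖v‖| / (‖v‖ * ‖w‖) := by
        rw [inv_sub_inv hv0.ne' hw0.ne', abs_div, abs_of_pos (mul_pos hv0 hw0)]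
      rw [this, div_mul_eq_mul_div]
      rw [div_le_iff₀ (by positivity)]
      have hvw : |‖w‖ - ‖v‖| ≤ ‖v - w‖ := by
        rw [abs_sub_comm]
        exact abs_norm_sub_norm_le v w
      calc |‖w‖ - ‖v‖| * ‖w‖ ≤ ‖v - w‖ * ‖w‖ := by
            apply mul_le_mul_of_nonneg_right hvw (norm_nonneg w)
      _ ≤ ‖v - w‖ * (‖v‖ * ‖w‖) := by
            apply mul_le_mul_of_nonneg_left _ (norm_nonneg _)
            nlinarith
      _ = ‖v - w‖ * (‖v‖ * ‖w‖) := rfl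
    have h5 : ‖v‖⁻¹ * ‖v - w‖ ≤ ‖v - w‖ := by
      apply mul_le_of_le_one_left (norm_nonneg _)
      rw [inv_le_one_iff₀]; right; exact hv
    calc ‖(‖v‖⁻¹ • v) - (‖w‖⁻¹ • w)‖ ≤ ‖v‖⁻¹ * ‖v - w‖ + |‖v‖⁻¹ - ‖w‖⁻¹| * ‖w‖ := by
          rw [← h2, ← h3]; exact h1
    _ ≤ ‖v - w‖ + ‖v - w‖ := add_le_add h5 h4
    _ = 2 * ‖v - w‖ := by ring
  simpa [dist_eq_norm] using key

lemma unitSphere_subset_image :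
    unitSphere n ⊆ (fun v : Euc n => ‖v‖⁻¹ • v) '' supSphere n := by
  intro x hx
  have hxnorm : ‖x‖ = 1 := by simpa [unitSphere] using hx
  have hx0 : x ≠ 0 := by intro h; rw [h] at hxnorm; simp at hxnorm
  set t : ℝ := ‖WithLp.equiv 2 (Psp n) x‖ with ht
  have ht0 : 0 < t := by
    rw [ht, norm_pos_iff]
    intro h
    apply hx0
    have := congrArg (WithLp.equiv 2 (Psp n)).symm h
    simpa using this
  refine ⟨t⁻¹ • x, ?_, ?_⟩
  · simp only [supSphere, Set.mem_preimage, mem_sphere_zero_iff_norm]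
    rw [show (WithLp.equiv 2 (Psp n)) (t⁻¹ • x) = t⁻¹ • WithLp.equiv 2 (Psp n) x from rfl, norm_smul, Real.norm_eq_abs, abs_of_pos (by positivity), ← ht]
    field_simp
  · have hnv : ‖t⁻¹ • x‖ = t⁻¹ := by
      rw [norm_smul, Real.norm_eq_abs, abs_of_pos (by positivity), hxnorm, mul_one]
    show ‖t⁻¹ • x‖⁻¹ • (t⁻¹ • x) = x
    rw [hnv]
    simp only [inv_inv, smul_smul]
    rw [mul_inv_cancel₀ ht0.ne', one_smul]

lemma muH_hemi_lt_top : (μH[(n : ℝ)] : Measure (Euc n)) (upperHemi n) < ⊤ := by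
  have h1 : upperHemi n ⊆ (fun v : Euc n => ‖v‖⁻¹ • v) '' supSphere n :=
    fun x hx => unitSphere_subset_image hx.1
  apply lt_of_le_of_lt (measure_mono h1)
  have hlip : LipschitzOnWith 2 (fun v : Euc n => ‖v‖⁻¹ • v) (supSphere n) := by
    apply LipschitzOnWith.of_dist_le_mul
    intro v hv w hw
    simpa using normalize_lip (norm_le_of_supSphere hv) (norm_le_of_supSphere hw)
  apply lt_of_le_of_lt (hlip.hausdorffMeasure_image_le (Nat.cast_nonneg n))
  exact ENNReal.mul_lt_top (ENNReal.rpow_lt_top_of_nonneg (Nat.cast_nonneg n)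
    ENNReal.coe_ne_top) muH_supSphere_lt_top

def projE (n : ℕ) : Euc n → Pn n := fun x k => x k.castSucc

lemma lipschitz_projE : LipschitzWith 1 (projE n) := by
  apply LipschitzWith.of_dist_le_mul
  intro x y
  rw [NNReal.coe_one, one_mul, dist_pi_le_iff dist_nonneg]
  intro k
  calc dist (projE n x k) (projE n y k) = |(x - y) k.castSucc| := by
        simp [projE, Real.dist_eq, PiLp.sub_apply]
  _ ≤ dist x y := by rw [dist_eq_norm]; exact coord_le_norm (x - y) _

lemma closedBall_subset_projE_image (hn : 1 ≤ n) :
    Metric.closedBall (0 : Pn n) ((n : ℝ)⁻¹) ⊆ projE n '' upperHemi n := by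
  intro u hu
  have hnpos : (0:ℝ) < n := by exact_mod_cast hn
  have hub : ∀ k, |u k| ≤ (n : ℝ)⁻¹ := by
    intro k
    have := norm_le_pi_norm u k
    have h2 : ‖u‖ ≤ (n : ℝ)⁻¹ := by
      simpa [dist_zero_right] using Metric.mem_closedBall.1 hu
    calc |u k| = ‖u k‖ := (Real.norm_eq_abs _).symm
    _ ≤ ‖u‖ := norm_le_pi_norm u k
    _ ≤ (n : ℝ)⁻¹ := h2
  set t : ℝ := ∑ k, u k ^ 2 with htdef
  have ht0 : 0 ≤ t := Finset.sum_nonneg fun k _ => sq_nonneg _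
  have ht1 : t ≤ 1 := by
    have : t ≤ ∑ _k : Fin n, ((n : ℝ)⁻¹)^2 := by
      apply Finset.sum_le_sum
      intro k _
      calc u k ^ 2 = |u k| ^ 2 := (sq_abs _).symm
      _ ≤ ((n:ℝ)⁻¹)^2 := by
            apply pow_le_pow_left₀ (abs_nonneg _) (hub k)
    rw [Finset.sum_const, Finset.card_univ, Fintype.card_fin, nsmul_eq_mul] at this
    calc t ≤ n * ((n:ℝ)⁻¹)^2 := this
    _ = (n:ℝ)⁻¹ := by field_simp
    _ ≤ 1 := by
      rw [inv_le_one_iff₀]; right; exact_mod_cast hn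
  set s : ℝ := Real.sqrt (1 - t) with hsdef
  set x : Euc n := WithLp.toLp 2 (fun j => Fin.lastCases s (fun k => u k) j : Fin (n+1) → ℝ) with hxdef
  have hxlast : x (Fin.last n) = s := by
    simp [hxdef, Fin.lastCases_last]
  have hxcast : ∀ k : Fin n, x k.castSucc = u k := by
    intro k
    simp [hxdef, Fin.lastCases_castSucc]
  have hxnorm : ‖x‖ = 1 := by
    rw [EuclideanSpace.norm_eq]
    have : ∑ j, x j ^ 2 = 1 := by
      rw [Fin.sum_univ_castSucc]
      have h1 : ∑ k : Fin n, x k.castSucc ^ 2 = t := by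
        rw [htdef]; exact Finset.sum_congr rfl fun k _ => by rw [hxcast k]
      rw [h1, hxlast, hsdef, Real.sq_sqrt (by linarith)]
      ring
    simp only [Real.norm_eq_abs, sq_abs]
    rw [this, Real.sqrt_one]
  refine ⟨x, ⟨?_, ?_⟩, ?_⟩
  · simpa [unitSphere, mem_sphere_zero_iff_norm] using hxnorm
  · rw [hxlast, hsdef]; exact Real.sqrt_nonneg _
  · funext k
    exact hxcast k

lemma muH_hemi_pos (hn : 1 ≤ n) : 0 < (μH[(n : ℝ)] : Measure (Euc n)) (upperHemi n) := by
  have hnpos : (0:ℝ) < (n : ℝ)⁻¹ := by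
    have : (0:ℝ) < n := by exact_mod_cast hn
    positivity
  have h1 : (0:ℝ≥0∞) < (μH[(n : ℝ)] : Measure (Pn n)) (Metric.closedBall 0 ((n : ℝ)⁻¹)) := by
    rw [muH_pi_n_eq_volume]
    exact Metric.measure_closedBall_pos _ _ hnpos
  have h2 := measure_mono (μ := (μH[(n : ℝ)] : Measure (Pn n))) (closedBall_subset_projE_image hn)
  have h3 := lipschitz_projE.hausdorffMeasure_image_le (d := (n : ℝ)) (Nat.cast_nonneg n)
    (upperHemi n)
  have := lt_of_lt_of_le (lt_of_lt_of_le h1 h2) h3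
  simpa using this

lemma sigma_apply {S : Set (Euc n)} (hS : MeasurableSet S) :
    sigmaPlus n S = ((μH[(n:ℝ)] : Measure (Euc n)) (upperHemi n))⁻¹ *
      (μH[(n:ℝ)] : Measure (Euc n)) (S ∩ upperHemi n) := by
  simp [sigmaPlus, Measure.restrict_apply hS]

lemma sigma_hemi (hn : 1 ≤ n) : sigmaPlus n (upperHemi n) = 1 := by
  rw [sigma_apply measurableSet_hemi, Set.inter_self]
  exact ENNReal.inv_mul_cancel (muH_hemi_pos hn).ne' muH_hemi_lt_top.ne

lemma sigma_probability (hn : 1 ≤ n) : IsProbabilityMeasure (sigmaPlus n) := by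
  constructor
  rw [sigma_apply MeasurableSet.univ, Set.univ_inter]
  exact ENNReal.inv_mul_cancel (muH_hemi_pos hn).ne' muH_hemi_lt_top.ne

lemma dist_le_of_geod {x y tx ty : Euc n} (hx : ‖x‖ = 1) (hy : ‖y‖ = 1)
    (htx : ‖tx‖ = 1) (hty : ‖ty‖ = 1)
    (h : Real.arccos (inner ℝ tx ty) ≤ Real.arccos (inner ℝ x y)) : dist tx ty ≤ dist x y := by
  have hxy : |(inner ℝ x y : ℝ)| ≤ 1 := by
    have := abs_real_inner_le_norm x y; simpa [hx, hy] using this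
  have htxy : |(inner ℝ tx ty : ℝ)| ≤ 1 := by
    have := abs_real_inner_le_norm tx ty; simpa [htx, hty] using this
  have hge : (inner ℝ x y : ℝ) ≤ inner ℝ tx ty := by
    by_contra hcon
    push_neg at hcon
    have h2 : Real.arccos (inner ℝ x y) < Real.arccos (inner ℝ tx ty) :=
      Real.strictAntiOn_arccos ⟨(abs_le.1 htxy).1, (abs_le.1 htxy).2⟩
        ⟨(abs_le.1 hxy).1, (abs_le.1 hxy).2⟩ hcon
    exact absurd h (not_le.2 h2)
  have e1 : dist tx ty ^ 2 = 2 - 2 * (inner ℝ tx ty : ℝ) := by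
    rw [dist_eq_norm, norm_sub_sq_real, htx, hty]; ring
  have e2 : dist x y ^ 2 = 2 - 2 * (inner ℝ x y : ℝ) := by
    rw [dist_eq_norm, norm_sub_sq_real, hx, hy]; ring
  have hsq : dist tx ty ^ 2 ≤ dist x y ^ 2 := by rw [e1, e2]; linarith
  have := Real.sqrt_le_sqrt hsq
  simpa [Real.sqrt_sq dist_nonneg] using this

end Stmt5Aux

theorem stmt5' (n : ℕ) (hn : 2 ≤ n) (ν : Measure (Euc n)) [IsProbabilityMeasure ν]
    (h_supp : ν (upperHemi n) = 1)
    (h_full : ∀ x ∈ upperHemi n, ∀ ε > (0 : ℝ), 0 < ν (Metric.ball x ε))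
    (h_ne : ν ≠ sigmaPlus n) :
    ¬ ∃ T : Euc n → Euc n, (∀ x ∈ upperHemi n, T x ∈ upperHemi n) ∧
      Set.InjOn T (upperHemi n) ∧
      (∀ x ∈ upperHemi n, ∀ y ∈ upperHemi n,
        Real.arccos (inner ℝ (T x) (T y)) ≤ Real.arccos (inner ℝ x y)) ∧
      Measure.map T (sigmaPlus n) = ν := by
  have hn1 : 1 ≤ n := le_trans (by norm_num) hn
  rintro ⟨T, hTmap, hTinj, hTlip, hTpush⟩
  set K := upperHemi n with hKdef
  have hKm : MeasurableSet K := Stmt5Aux.measurableSet_hemi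
  have hKc : IsCompact K := Stmt5Aux.isCompact_hemi
  haveI hprob : IsProbabilityMeasure (sigmaPlus n) := Stmt5Aux.sigma_probability hn1
  have hσK : sigmaPlus n K = 1 := Stmt5Aux.sigma_hemi hn1
  -- T is 1-Lipschitz on K for the Euclidean distance
  have hlip : ∀ x ∈ K, ∀ y ∈ K, dist (T x) (T y) ≤ dist x y := by
    intro x hx y hy
    exact Stmt5Aux.dist_le_of_geod (Stmt5Aux.norm_of_mem_hemi hx)
      (Stmt5Aux.norm_of_mem_hemi hy) (Stmt5Aux.norm_of_mem_hemi (hTmap x hx))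
      (Stmt5Aux.norm_of_mem_hemi (hTmap y hy)) (hTlip x hx y hy)
  have hlip1 : LipschitzOnWith 1 T K := by
    apply LipschitzOnWith.of_dist_le_mul
    intro x hx y hy
    simpa using hlip x hx y hy
  have hcont : ContinuousOn T K := hlip1.continuousOn
  have haem : AEMeasurable T (sigmaPlus n) := by
    rw [sigmaPlus]
    exact (hcont.aemeasurable hKm).smul_measure _
  have hmap : ∀ {B : Set (Euc n)}, MeasurableSet B → ν B = sigmaPlus n (T ⁻¹' B) := by
    intro B hB
    rw [← hTpush, Measure.map_apply_of_aemeasurable haem hB]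
  -- surjectivity of T on K
  have himgc : IsCompact (T '' K) := hKc.image_of_continuousOn hcont
  have himgm : MeasurableSet (T '' K) := himgc.isClosed.measurableSet
  have hν1 : ν (T '' K) = 1 := by
    apply le_antisymm prob_le_one
    calc (1:ℝ≥0∞) = sigmaPlus n K := hσK.symm
    _ ≤ sigmaPlus n (T ⁻¹' (T '' K)) := measure_mono (Set.subset_preimage_image T K)
    _ = ν (T '' K) := (hmap himgm).symm
  have hνc : ν ((T '' K)ᶜ) = 0 := by
    rw [measure_compl himgm (measure_ne_top ν _), measure_univ, hν1, tsub_self]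
  have hsurj : K ⊆ T '' K := by
    intro y hy
    by_contra hyn
    obtain ⟨ε, hε, hball⟩ := Metric.isOpen_iff.1 himgc.isClosed.isOpen_compl y hyn
    have hz : ν (Metric.ball y ε) = 0 :=
      le_antisymm (le_trans (measure_mono hball) hνc.le) zero_le
    exact absurd (h_full y hy ε hε) (by rw [hz]; exact lt_irrefl 0)
  -- the key inequality on closed subsets of K
  set μ : Measure (Euc n) := (μH[(n:ℝ)] : Measure (Euc n)) with hμdef
  have key : ∀ B ⊆ K, IsClosed B → sigmaPlus n B ≤ ν B := by
    intro B hBK hBc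
    set A := K ∩ T ⁻¹' B with hA
    have hAc : IsClosed A := hcont.preimage_isClosed_of_isClosed Stmt5Aux.isClosed_hemi hBc
    have hAm : MeasurableSet A := hAc.measurableSet
    have hBsub : B ⊆ T '' A := by
      intro b hb
      obtain ⟨a, haK, rfl⟩ := hsurj (hBK hb)
      exact ⟨a, ⟨haK, hb⟩, rfl⟩
    have hμB : μ B ≤ μ A := by
      calc μ B ≤ μ (T '' A) := measure_mono hBsub
      _ ≤ 1 * μ A := by
            have hmono : LipschitzOnWith 1 T A :=
              hlip1.mono (hA ▸ Set.inter_subset_left)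
            have := hmono.hausdorffMeasure_image_le (d := (n:ℝ)) (Nat.cast_nonneg n)
            simpa using this
      _ = μ A := one_mul _
    calc sigmaPlus n B = (μ K)⁻¹ * μ (B ∩ K) := Stmt5Aux.sigma_apply hBc.measurableSet
    _ = (μ K)⁻¹ * μ B := by rw [Set.inter_eq_self_of_subset_left hBK]
    _ ≤ (μ K)⁻¹ * μ A := mul_le_mul_right hμB _
    _ = (μ K)⁻¹ * μ (A ∩ K) := by
          rw [Set.inter_eq_self_of_subset_left Set.inter_subset_left]
    _ = sigmaPlus n A := (Stmt5Aux.sigma_apply hAm).symm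
    _ ≤ sigmaPlus n (T ⁻¹' B) := measure_mono Set.inter_subset_right
    _ = ν B := (hmap hBc.measurableSet).symm
  -- σ ≤ ν on all measurable sets
  have hle : ∀ S : Set (Euc n), MeasurableSet S → sigmaPlus n S ≤ ν S := by
    intro S hS
    have h1 : sigmaPlus n S = sigmaPlus n (S ∩ K) := by
      rw [Stmt5Aux.sigma_apply hS, Stmt5Aux.sigma_apply (hS.inter hKm),
        Set.inter_assoc, Set.inter_self]
    rw [h1]
    apply ENNReal.le_of_forall_pos_le_add
    intro ε hε _
    obtain ⟨F, hFS, hFc, hF⟩ := (hS.inter hKm).exists_isClosed_lt_add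
      (measure_ne_top (sigmaPlus n) _) (ε := (ε : ℝ≥0∞)) (by exact_mod_cast hε.ne')
    have hFK : F ⊆ K := hFS.trans Set.inter_subset_right
    calc sigmaPlus n (S ∩ K) ≤ sigmaPlus n F + ε := hF.le
    _ ≤ ν F + ε := add_le_add_left (key F hFK hFc) _
    _ ≤ ν S + ε := add_le_add_left (measure_mono (hFS.trans Set.inter_subset_left)) _
  -- conclude ν = σ₊
  apply h_ne
  ext S hS
  refine le_antisymm ?_ (hle S hS)
  have h1 := hle Sᶜ hS.compl
  have h2 : ν S + ν Sᶜ = 1 := by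
    rw [measure_add_measure_compl hS, measure_univ]
  have h3 : sigmaPlus n S + sigmaPlus n Sᶜ = 1 := by
    rw [measure_add_measure_compl hS, measure_univ]
  have h4 : ν S + ν Sᶜ ≤ sigmaPlus n S + ν Sᶜ := by
    rw [h2]
    calc (1:ℝ≥0∞) = sigmaPlus n S + sigmaPlus n Sᶜ := h3.symm
    _ ≤ sigmaPlus n S + ν Sᶜ := add_le_add_right h1 _
  exact (ENNReal.add_le_add_iff_right (measure_ne_top ν Sᶜ)).1 h4


/-- If `ν` is a probability measure with full support `S^n_+` and `ν ≠ σ_+`,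
then there is no injective `1`-Lipschitz map `T : S^n_+ → S^n_+` pushing `σ_+` forward
to `ν`. -/
theorem stmt5 (n : ℕ) (hn : 2 ≤ n) (ν : Measure (Euc n)) [IsProbabilityMeasure ν]
    (h_supp : ν (upperHemi n) = 1)
    (h_full : ∀ x ∈ upperHemi n, ∀ ε > (0 : ℝ), 0 < ν (Metric.ball x ε))
    (h_ne : ν ≠ sigmaPlus n) :
    ¬ ∃ T : Euc n → Euc n, (∀ x ∈ upperHemi n, T x ∈ upperHemi n) ∧
      Set.InjOn T (upperHemi n) ∧
      (∀ x ∈ upperHemi n, ∀ y ∈ upperHemi n, geod (T x) (T y) ≤ geod x y) ∧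
      Measure.map T (sigmaPlus n) = ν := by
  exact stmt5' n hn ν h_supp h_full h_ne

end
end

section
/- Let n ≥ 2 and let ν be a probability measure on S^n_+ with density g with respect to σ_+, where g : S^n_+ → (0,∞) is measurable and satisfies a ≤ g ≤ b for some constants 0 < a < b. Suppose T : S^n_+ → S^n_+ is a measurable map with T_#σ_+ = ν which minimizes ∫ d(x, S(x))² dσ_+(x) among all measurable maps S with S_#σ_+ = ν. If T is 1-Lipschitz with respect to the geodesic distance, then ν = σ_+. -/
open MeasureTheory Real

noncomputable section

section Aux

variable {E : Type*} [NormedAddCommGroup E] [InnerProductSpace ℝ E]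

lemma stmt6_chord_sq {x y : E} (hx : ‖x‖ = 1) (hy : ‖y‖ = 1) :
    ‖x - y‖ ^ 2 = 2 - 2 * (inner ℝ x y : ℝ) := by
  rw [@norm_sub_sq_real, hx, hy]; ring

lemma stmt6_inner_mem {x y : E} (hx : ‖x‖ = 1) (hy : ‖y‖ = 1) :
    -1 ≤ (inner ℝ x y : ℝ) ∧ (inner ℝ x y : ℝ) ≤ 1 := by
  have h := abs_real_inner_le_norm x y
  rw [hx, hy, mul_one] at h
  exact abs_le.1 h

lemma stmt6_chord_eq_sin {x y : E} (hx : ‖x‖ = 1) (hy : ‖y‖ = 1) :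
    ‖x - y‖ = 2 * Real.sin (Real.arccos (inner ℝ x y) / 2) := by
  set t : ℝ := inner ℝ x y with ht
  obtain ⟨h1, h2⟩ := stmt6_inner_mem hx hy
  have hθ0 : 0 ≤ Real.arccos t := Real.arccos_nonneg t
  have hθπ : Real.arccos t ≤ π := Real.arccos_le_pi t
  have hcos : Real.cos (Real.arccos t) = t := Real.cos_arccos h1 h2
  have hs : 0 ≤ Real.sin (Real.arccos t / 2) :=
    Real.sin_nonneg_of_nonneg_of_le_pi (by linarith) (by linarith [Real.pi_pos])
  have hsq : Real.sin (Real.arccos t / 2) ^ 2 = 1/2 - Real.cos (Real.arccos t) / 2 := by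
    have := Real.sin_sq_eq_half_sub (Real.arccos t / 2)
    rwa [mul_div_cancel₀ _ (two_ne_zero)] at this
  have h3 : ‖x - y‖ ^ 2 = (2 * Real.sin (Real.arccos t / 2)) ^ 2 := by
    rw [stmt6_chord_sq hx hy]; rw [hcos] at hsq; nlinarith
  have h4 : (0:ℝ) ≤ ‖x - y‖ := norm_nonneg _
  nlinarith [sq_nonneg (‖x - y‖ - 2 * Real.sin (Real.arccos t / 2))]

lemma stmt6_chord_le_arc {x y : E} (hx : ‖x‖ = 1) (hy : ‖y‖ = 1) :
    ‖x - y‖ ≤ Real.arccos (inner ℝ x y) := by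
  set t : ℝ := inner ℝ x y with ht
  obtain ⟨h1, h2⟩ := stmt6_inner_mem hx hy
  have hθ0 : 0 ≤ Real.arccos t := Real.arccos_nonneg t
  have hcos : Real.cos (Real.arccos t) = t := Real.cos_arccos h1 h2
  have hb := Real.one_sub_sq_div_two_le_cos (x := Real.arccos t)
  have h3 : ‖x - y‖ ^ 2 ≤ Real.arccos t ^ 2 := by
    rw [stmt6_chord_sq hx hy]; nlinarith
  nlinarith [norm_nonneg (x - y)]

lemma stmt6_arc_le_chord (ε : ℝ) (hε : 0 < ε) :
    ∃ δ : ℝ, 0 < δ ∧ ∀ x y : E, ‖x‖ = 1 → ‖y‖ = 1 → ‖x - y‖ ≤ δ →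
      Real.arccos (inner ℝ x y) ≤ (1 + ε) * ‖x - y‖ := by
  set θ₀ : ℝ := min 1 (4 * Real.sqrt (ε / (1 + ε))) with hθ₀def
  have hsq : 0 < Real.sqrt (ε / (1 + ε)) :=
    Real.sqrt_pos.2 (div_pos hε (by linarith))
  have hθ₀pos : 0 < θ₀ := lt_min one_pos (by linarith)
  have hθ₀le1 : θ₀ ≤ 1 := min_le_left _ _
  have hπ : (1:ℝ) < π := by linarith [Real.pi_gt_three]
  refine ⟨2 * Real.sin (θ₀ / 2), by
    have : 0 < Real.sin (θ₀ / 2) :=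
      Real.sin_pos_of_pos_of_lt_pi (by linarith) (by linarith)
    linarith, ?_⟩
  intro x y hx hy hc
  obtain ⟨h1, h2⟩ := stmt6_inner_mem hx hy
  set t : ℝ := inner ℝ x y with htdef
  set θ : ℝ := Real.arccos t with hθdef
  have hθ0 : 0 ≤ θ := Real.arccos_nonneg t
  have hθπ : θ ≤ π := Real.arccos_le_pi t
  have hchord : ‖x - y‖ = 2 * Real.sin (θ / 2) := stmt6_chord_eq_sin hx hy
  rw [hchord] at hc ⊢
  have hθθ₀ : θ ≤ θ₀ := by
    by_contra hlt
    push_neg at hlt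
    have := Real.sin_lt_sin_of_lt_of_le_pi_div_two
      (x := θ₀ / 2) (y := θ / 2) (by linarith) (by linarith) (by linarith)
    linarith
  rcases eq_or_lt_of_le hθ0 with h0 | h0
  · rw [← h0]
    simp only [zero_div, Real.sin_zero, mul_zero]
    positivity
  · have hcube := Real.sin_gt_sub_cube (x := θ / 2) (by linarith)
    have hθsq : θ ^ 2 ≤ 16 * (ε / (1 + ε)) := by
      have h4 : θ ≤ 4 * Real.sqrt (ε / (1 + ε)) := hθθ₀.trans (min_le_right _ _)
      have := Real.sq_sqrt (le_of_lt (div_pos hε (by linarith : (0:ℝ) < 1 + ε)))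
      nlinarith
    have key : θ / (1 + ε) ≤ 2 * Real.sin (θ / 2) := by
      have h5 : θ * (1 - θ ^ 2 / 16) ≤ 2 * Real.sin (θ / 2) := by nlinarith
      have h6 : θ / (1 + ε) ≤ θ * (1 - θ ^ 2 / 16) := by
        rw [div_le_iff₀ (by linarith : (0:ℝ) < 1 + ε)]
        have hee : ε / (1 + ε) * (1 + ε) = ε := div_mul_cancel₀ _ (by linarith)
        nlinarith [mul_le_mul_of_nonneg_left hθsq hθ0]
      linarith
    have hfin := (div_le_iff₀ (show (0:ℝ) < 1 + ε by linarith)).1 key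
    calc θ ≤ 2 * Real.sin (θ/2) * (1+ε) := hfin
    _ = (1+ε) * (2 * Real.sin (θ/2)) := by ring

end Aux

lemma stmt6_exists_partition (α : Type*) [MetricSpace α] [MeasurableSpace α] [BorelSpace α]
    [TopologicalSpace.SeparableSpace α] [Nonempty α] (δ : ℝ) (hδ : 0 < δ) :
    ∃ P : ℕ → Set α, (∀ i, MeasurableSet (P i)) ∧ Pairwise (Function.onFun Disjoint P) ∧
      (⋃ i, P i) = Set.univ ∧ ∀ i, ∀ x ∈ P i, ∀ y ∈ P i, dist x y ≤ δ := by
  obtain ⟨u, hu⟩ := TopologicalSpace.exists_dense_seq α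
  set B : ℕ → Set α := fun i => Metric.ball (u i) (δ / 2) with hB
  refine ⟨disjointed B, fun i => MeasurableSet.disjointed (fun j => measurableSet_ball) i,
    disjoint_disjointed B, ?_, ?_⟩
  · rw [iUnion_disjointed]
    ext x
    simp only [Set.mem_iUnion, Set.mem_univ, iff_true]
    obtain ⟨i, hi⟩ := hu.exists_dist_lt x (by linarith : 0 < δ / 2)
    exact ⟨i, by simpa [hB, Metric.mem_ball, dist_comm] using hi⟩
  · intro i x hx y hy
    have hx' : x ∈ B i := disjointed_subset B i hx
    have hy' : y ∈ B i := disjointed_subset B i hy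
    rw [hB, Metric.mem_ball] at hx' hy'
    calc dist x y ≤ dist x (u i) + dist (u i) y := dist_triangle _ _ _
    _ ≤ δ := by rw [dist_comm (u i) y] at *; linarith

lemma stmt6_ennreal_le (x m : ENNReal) (n : ℕ)
    (h : ∀ k : ℕ, x ≤ ENNReal.ofReal (1 + 1 / (k + 1)) ^ n * m) : x ≤ m := by
  have h1 : Filter.Tendsto (fun k : ℕ => (1:ℝ) + 1 / (k + 1)) Filter.atTop (nhds 1) := by
    have := tendsto_one_div_add_atTop_nhds_zero_nat (𝕜 := ℝ)
    simpa using (tendsto_const_nhds.add this)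
  have h2 : Filter.Tendsto (fun k : ℕ => ENNReal.ofReal (1 + 1 / (k + 1))) Filter.atTop
      (nhds 1) := by
    have := (ENNReal.continuous_ofReal.tendsto 1).comp h1
    simpa [Function.comp_def] using this
  have h3 : Filter.Tendsto (fun k : ℕ => ENNReal.ofReal (1 + 1 / (k + 1)) ^ n * m) Filter.atTop
      (nhds m) := by
    have h4 := ENNReal.Tendsto.pow (n := n) h2
    have := ENNReal.Tendsto.mul_const (b := m) h4 (Or.inl (by simp : (1:ENNReal) ^ n ≠ 0))
    simpa using this
  exact ge_of_tendsto' h3 h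

/-- If `ν` has a measurable density `g` w.r.t. `σ_+` with `0 < a ≤ g ≤ b`,
and the quadratic-cost optimal transport map `T` from `σ_+` to `ν` is `1`-Lipschitz for the
geodesic distance, then `ν = σ_+`. -/
theorem stmt6 (n : ℕ) (hn : 2 ≤ n) (g : Euc n → ℝ) (hg_meas : Measurable g)
    (a b : ℝ) (ha : 0 < a) (hab : a < b)
    (hg : ∀ x ∈ upperHemi n, a ≤ g x ∧ g x ≤ b)
    (ν : Measure (Euc n)) [IsProbabilityMeasure ν]
    (hν : ν = (sigmaPlus n).withDensity (fun x => ENNReal.ofReal (g x)))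
    (T : Euc n → Euc n) (hT_meas : Measurable T)
    (hT_maps : ∀ x ∈ upperHemi n, T x ∈ upperHemi n)
    (hT_push : Measure.map T (sigmaPlus n) = ν)
    (hT_opt : ∀ S : Euc n → Euc n, Measurable S → (∀ x ∈ upperHemi n, S x ∈ upperHemi n) →
      Measure.map S (sigmaPlus n) = ν →
      ∫ x, (geod x (T x)) ^ 2 ∂(sigmaPlus n) ≤ ∫ x, (geod x (S x)) ^ 2 ∂(sigmaPlus n))
    (hT_lip : ∀ x ∈ upperHemi n, ∀ y ∈ upperHemi n, geod (T x) (T y) ≤ geod x y) :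
    ν = sigmaPlus n := by
  classical
  -- basic facts about the hemisphere
  have hemi_closed : IsClosed (upperHemi n) := by
    have h1 : IsClosed (unitSphere n) := Metric.isClosed_sphere
    have h2 : IsClosed {x : Euc n | 0 ≤ x (Fin.last n)} :=
      isClosed_le continuous_const (by fun_prop)
    exact h1.inter h2
  have hemi_meas : MeasurableSet (upperHemi n) := hemi_closed.measurableSet
  have hemi_bdd : Bornology.IsBounded (upperHemi n) :=
    (Metric.isBounded_closedBall (x := (0 : Euc n)) (r := 1)).subset
      (fun x hx => Metric.sphere_subset_closedBall hx.1)
  have hemi_cpt : IsCompact (upperHemi n) :=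
    Metric.isCompact_of_isClosed_isBounded hemi_closed hemi_bdd
  have hnorm : ∀ x ∈ upperHemi n, ‖x‖ = 1 := fun x hx => mem_sphere_zero_iff_norm.1 hx.1
  -- basic facts about sigmaPlus
  have hσ_apply : ∀ s : Set (Euc n), sigmaPlus n s =
      ((μH[n] : Measure (Euc n)) (upperHemi n))⁻¹ *
        (μH[n] : Measure (Euc n)) (s ∩ upperHemi n) := by
    intro s
    rw [sigmaPlus, Measure.smul_apply, Measure.restrict_apply' hemi_meas, smul_eq_mul]
  have hσ_univ : sigmaPlus n Set.univ = 1 := by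
    calc sigmaPlus n Set.univ = (Measure.map T (sigmaPlus n)) Set.univ := by
          rw [Measure.map_apply hT_meas MeasurableSet.univ, Set.preimage_univ]
    _ = ν Set.univ := by rw [hT_push]
    _ = 1 := measure_univ
  have hσ_hemi : sigmaPlus n (upperHemi n) = 1 := by
    have h := hσ_univ
    rw [hσ_apply, Set.univ_inter] at h
    rw [hσ_apply, Set.inter_self]
    exact h
  -- the key estimate: T does not increase Hausdorff measure of subsets of the hemisphere
  have key : ∀ A : Set (Euc n), MeasurableSet A → A ⊆ upperHemi n →
      (μH[n] : Measure (Euc n)) (T '' A) ≤ (μH[n] : Measure (Euc n)) A := by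
    intro A hA hAs
    apply stmt6_ennreal_le _ _ n
    intro k
    set ε : ℝ := 1 / (k + 1) with hεdef
    have hεpos : 0 < ε := by positivity
    obtain ⟨δ, hδpos, hδ⟩ := stmt6_arc_le_chord (E := Euc n) ε hεpos
    have hTlip : ∀ x ∈ upperHemi n, ∀ y ∈ upperHemi n, dist x y ≤ δ →
        dist (T x) (T y) ≤ (1 + ε) * dist x y := by
      intro x hx y hy hd
      rw [dist_eq_norm] at hd ⊢
      rw [dist_eq_norm]
      calc ‖T x - T y‖ ≤ Real.arccos (inner ℝ (T x) (T y)) :=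
            stmt6_chord_le_arc (hnorm _ (hT_maps x hx)) (hnorm _ (hT_maps y hy))
      _ ≤ Real.arccos (inner ℝ x y) := hT_lip x hx y hy
      _ ≤ (1 + ε) * ‖x - y‖ := hδ x y (hnorm x hx) (hnorm y hy) hd
    obtain ⟨P, hPm, hPd, hPu, hPdiam⟩ := stmt6_exists_partition (Euc n) δ hδpos
    have hAeq : A = ⋃ i, A ∩ P i := by
      rw [← Set.inter_iUnion, hPu, Set.inter_univ]
    have himg : T '' A ⊆ ⋃ i, T '' (A ∩ P i) := by
      rw [← Set.image_iUnion, ← hAeq]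
    set K : NNReal := (1 + ε).toNNReal with hKdef
    have hKcoe : ((K : NNReal) : ℝ) = 1 + ε := Real.coe_toNNReal _ (by linarith)
    have hpiece : ∀ i, (μH[n] : Measure (Euc n)) (T '' (A ∩ P i)) ≤
        (K : ENNReal) ^ (n : ℝ) * (μH[n] : Measure (Euc n)) (A ∩ P i) := by
      intro i
      have hlip : LipschitzOnWith K T (A ∩ P i) := by
        apply LipschitzOnWith.of_dist_le_mul
        intro x hx y hy
        rw [hKcoe]
        exact hTlip x (hAs hx.1) y (hAs hy.1) (hPdiam i x hx.2 y hy.2)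
      exact hlip.hausdorffMeasure_image_le (by positivity)
    have hdisj : Pairwise (Function.onFun Disjoint fun i => A ∩ P i) := fun i j hij =>
      (hPd hij).mono Set.inter_subset_right Set.inter_subset_right
    have hKpow : (K : ENNReal) ^ (n : ℝ) = ENNReal.ofReal (1 + ε) ^ n := by
      rw [ENNReal.rpow_natCast]; rfl
    calc (μH[n] : Measure (Euc n)) (T '' A)
        ≤ (μH[n] : Measure (Euc n)) (⋃ i, T '' (A ∩ P i)) := measure_mono himg
    _ ≤ ∑' i, (μH[n] : Measure (Euc n)) (T '' (A ∩ P i)) := measure_iUnion_le _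
    _ ≤ ∑' i, (K : ENNReal) ^ (n : ℝ) * (μH[n] : Measure (Euc n)) (A ∩ P i) :=
        ENNReal.tsum_le_tsum hpiece
    _ = (K : ENNReal) ^ (n : ℝ) * ∑' i, (μH[n] : Measure (Euc n)) (A ∩ P i) :=
        ENNReal.tsum_mul_left
    _ = (K : ENNReal) ^ (n : ℝ) * (μH[n] : Measure (Euc n)) A := by
        rw [← measure_iUnion hdisj (fun i => hA.inter (hPm i)), ← hAeq]
    _ = ENNReal.ofReal (1 + ε) ^ n * (μH[n] : Measure (Euc n)) A := by rw [hKpow]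
  -- continuity of T on the hemisphere
  have hTcont : ContinuousOn T (upperHemi n) := by
    intro x hx
    rw [ContinuousWithinAt, tendsto_iff_dist_tendsto_zero]
    have hbound : ∀ y ∈ upperHemi n, dist (T y) (T x) ≤ Real.arccos (inner ℝ y x) := by
      intro y hy
      rw [dist_eq_norm]
      exact (stmt6_chord_le_arc (hnorm _ (hT_maps y hy)) (hnorm _ (hT_maps x hx))).trans
        (hT_lip y hy x hx)
    have hcont : Continuous fun y : Euc n => Real.arccos (inner ℝ y x) :=
      Real.continuous_arccos.comp (continuous_id.inner continuous_const)
    have hval : Real.arccos (inner ℝ x x : ℝ) = 0 := by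
      rw [real_inner_self_eq_norm_mul_norm, hnorm x hx]
      norm_num [Real.arccos_one]
    have hg0 : Filter.Tendsto (fun y : Euc n => Real.arccos (inner ℝ y x))
        (nhdsWithin x (upperHemi n)) (nhds 0) := by
      have h := (hcont.continuousWithinAt (s := upperHemi n) (x := x))
      rw [ContinuousWithinAt, hval] at h
      exact h
    exact squeeze_zero' (Filter.Eventually.of_forall (fun _ => dist_nonneg))
      (eventually_nhdsWithin_of_forall hbound) hg0
  -- the image of the hemisphere
  set s : Set (Euc n) := T '' upperHemi n with hsdef
  have hs_cpt : IsCompact s := hemi_cpt.image_of_continuousOn hTcont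
  have hs_meas : MeasurableSet s := hs_cpt.isClosed.measurableSet
  have hνs : ν s = 1 := by
    refine le_antisymm prob_le_one ?_
    rw [← hT_push, Measure.map_apply hT_meas hs_meas]
    have hsub : upperHemi n ⊆ T ⁻¹' s := fun x hx => ⟨x, hx, rfl⟩
    calc (1:ENNReal) = sigmaPlus n (upperHemi n) := hσ_hemi.symm
    _ ≤ sigmaPlus n (T ⁻¹' s) := measure_mono hsub
  have hνsc : ν sᶜ = 0 := by
    rw [measure_compl hs_meas (measure_ne_top ν s), hνs, measure_univ, tsub_self]
  -- the complement of the image is sigma-null (using the density lower bound)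
  have hσsc : sigmaPlus n (sᶜ ∩ upperHemi n) = 0 := by
    have hE : MeasurableSet (sᶜ ∩ upperHemi n) := hs_meas.compl.inter hemi_meas
    have h0 : ν (sᶜ ∩ upperHemi n) = 0 := measure_mono_null Set.inter_subset_left hνsc
    rw [hν, withDensity_apply _ hE] at h0
    have hlb : ENNReal.ofReal a * sigmaPlus n (sᶜ ∩ upperHemi n) ≤
        ∫⁻ x in sᶜ ∩ upperHemi n, ENNReal.ofReal (g x) ∂(sigmaPlus n) := by
      rw [← setLIntegral_const]
      exact setLIntegral_mono hg_meas.ennreal_ofReal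
        (fun x hx => ENNReal.ofReal_le_ofReal (hg x hx.2).1)
    rw [h0, nonpos_iff_eq_zero, mul_eq_zero] at hlb
    rcases hlb with h | h
    · exact absurd h (by simp [ENNReal.ofReal_eq_zero, not_le, ha])
    · exact h
  -- main comparison : sigmaPlus ≤ ν on measurable sets
  have hcomp : ∀ B : Set (Euc n), MeasurableSet B → sigmaPlus n B ≤ ν B := by
    intro B hB
    have hA : MeasurableSet (T ⁻¹' B ∩ upperHemi n) := (hT_meas hB).inter hemi_meas
    have hsub : B ∩ upperHemi n ∩ s ⊆ T '' (T ⁻¹' B ∩ upperHemi n) := by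
      rintro y ⟨⟨hyB, _⟩, x, hx, rfl⟩
      exact ⟨x, ⟨hyB, hx⟩, rfl⟩
    have e1 : sigmaPlus n B = sigmaPlus n (B ∩ upperHemi n) := by
      rw [hσ_apply, hσ_apply (B ∩ upperHemi n), Set.inter_assoc, Set.inter_self]
    have e2 : sigmaPlus n (B ∩ upperHemi n) ≤
        sigmaPlus n (B ∩ upperHemi n ∩ s) + sigmaPlus n (sᶜ ∩ upperHemi n) := by
      have hsub2 : B ∩ upperHemi n ⊆ (B ∩ upperHemi n ∩ s) ∪ (sᶜ ∩ upperHemi n) := by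
        intro y hy
        by_cases h : y ∈ s
        · exact Or.inl ⟨hy, h⟩
        · exact Or.inr ⟨h, hy.2⟩
      exact (measure_mono hsub2).trans (measure_union_le _ _)
    have e3 : sigmaPlus n (B ∩ upperHemi n ∩ s) ≤ sigmaPlus n (T ⁻¹' B ∩ upperHemi n) := by
      calc sigmaPlus n (B ∩ upperHemi n ∩ s)
          ≤ sigmaPlus n (T '' (T ⁻¹' B ∩ upperHemi n)) := measure_mono hsub
      _ = ((μH[n] : Measure (Euc n)) (upperHemi n))⁻¹ *
            (μH[n] : Measure (Euc n)) (T '' (T ⁻¹' B ∩ upperHemi n) ∩ upperHemi n) :=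
          hσ_apply _
      _ ≤ ((μH[n] : Measure (Euc n)) (upperHemi n))⁻¹ *
            (μH[n] : Measure (Euc n)) (T '' (T ⁻¹' B ∩ upperHemi n)) :=
          mul_le_mul_right (measure_mono Set.inter_subset_left) _
      _ ≤ ((μH[n] : Measure (Euc n)) (upperHemi n))⁻¹ *
            (μH[n] : Measure (Euc n)) (T ⁻¹' B ∩ upperHemi n) :=
          mul_le_mul_right (key _ hA Set.inter_subset_right) _
      _ = ((μH[n] : Measure (Euc n)) (upperHemi n))⁻¹ *
            (μH[n] : Measure (Euc n)) ((T ⁻¹' B ∩ upperHemi n) ∩ upperHemi n) := by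
          rw [Set.inter_assoc, Set.inter_self]
      _ = sigmaPlus n (T ⁻¹' B ∩ upperHemi n) := (hσ_apply _).symm
    have e4 : sigmaPlus n (T ⁻¹' B ∩ upperHemi n) ≤ sigmaPlus n (T ⁻¹' B) :=
      measure_mono Set.inter_subset_left
    have e5 : sigmaPlus n (T ⁻¹' B) = ν B := by
      rw [← hT_push, Measure.map_apply hT_meas hB]
    calc sigmaPlus n B = sigmaPlus n (B ∩ upperHemi n) := e1
    _ ≤ sigmaPlus n (B ∩ upperHemi n ∩ s) + sigmaPlus n (sᶜ ∩ upperHemi n) := e2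
    _ = sigmaPlus n (B ∩ upperHemi n ∩ s) := by rw [hσsc, add_zero]
    _ ≤ sigmaPlus n (T ⁻¹' B ∩ upperHemi n) := e3
    _ ≤ sigmaPlus n (T ⁻¹' B) := e4
    _ = ν B := e5
  -- conclude: two measures with equal (finite) total mass, one dominating the other
  refine Measure.ext fun B hB => ?_
  have h1 := hcomp B hB
  have h2 := hcomp Bᶜ hB.compl
  have hσB : sigmaPlus n B + sigmaPlus n Bᶜ = 1 := by
    rw [measure_add_measure_compl hB, hσ_univ]
  have hνB : ν B + ν Bᶜ = 1 := by
    rw [measure_add_measure_compl hB, measure_univ]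
  refine le_antisymm ?_ h1
  have hν_ne : ν Bᶜ ≠ ⊤ := measure_ne_top ν _
  have hσBle : ν B = 1 - ν Bᶜ := ENNReal.eq_sub_of_add_eq hν_ne hνB
  have hσBle2 : sigmaPlus n B = 1 - sigmaPlus n Bᶜ :=
    ENNReal.eq_sub_of_add_eq (by
      intro h
      rw [h] at hσB
      simp at hσB) hσB
  rw [hσBle, hσBle2]
  exact tsub_le_tsub_left h2 1

end
end

section
/- Let n ≥ 2. If T : S^n_+ → S^n_+ is a bijective map that is 1-Lipschitz with respect to the geodesic distance, then T(C) = C, where C = S^n_+ ∩ {x_{n+1} = 0} is the equator. -/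
open MeasureTheory Real

noncomputable section

section Expansive

variable {X : Type*} [MetricSpace X] [CompactSpace X]

lemma expand_iterate (f : X → X) (h : ∀ x y, dist x y ≤ dist (f x) (f y)) :
    ∀ (k : ℕ) (x y : X), dist x y ≤ dist (f^[k] x) (f^[k] y) := by
  intro k
  induction k with
  | zero => simp
  | succ m ih =>
    intro x y
    calc dist x y ≤ dist (f x) (f y) := h x y
      _ ≤ dist (f^[m] (f x)) (f^[m] (f y)) := ih _ _
      _ = dist (f^[m + 1] x) (f^[m + 1] y) := by
          rw [Function.iterate_succ_apply, Function.iterate_succ_apply]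

lemma almost_recurrent (f : X → X) (h : ∀ x y, dist x y ≤ dist (f x) (f y))
    (x : X) {ε : ℝ} (hε : 0 < ε) : ∃ k, 1 ≤ k ∧ dist (f^[k] x) x < ε := by
  obtain ⟨a, φ, hφ, ha⟩ := CompactSpace.tendsto_subseq (fun m => f^[m] x)
  rw [Metric.tendsto_atTop] at ha
  obtain ⟨N, hN⟩ := ha (ε / 2) (by linarith)
  have hlt : φ N < φ (N + 1) := hφ (Nat.lt_succ_self N)
  refine ⟨φ (N + 1) - φ N, by omega, ?_⟩
  have h1 : φ N + (φ (N + 1) - φ N) = φ (N + 1) := by omega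
  have h2 : dist (f^[φ N] (f^[φ (N + 1) - φ N] x)) (f^[φ N] x) < ε := by
    rw [← Function.iterate_add_apply, h1]
    have hA : dist (f^[φ (N + 1)] x) a < ε / 2 := hN (N + 1) (by omega)
    have hB : dist (f^[φ N] x) a < ε / 2 := hN N le_rfl
    calc dist (f^[φ (N + 1)] x) (f^[φ N] x)
        ≤ dist (f^[φ (N + 1)] x) a + dist a (f^[φ N] x) := dist_triangle _ _ _
      _ < ε / 2 + ε / 2 := by rw [dist_comm a]; exact add_lt_add hA hB
      _ = ε := by ring
  exact lt_of_le_of_lt (expand_iterate f h _ _ _) h2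

lemma expand_isometry (f : X → X) (h : ∀ x y, dist x y ≤ dist (f x) (f y)) :
    ∀ x y, dist (f x) (f y) = dist x y := by
  intro x y
  refine le_antisymm (le_of_forall_pos_le_add ?_) (h x y)
  intro ε hε
  set g : X × X → X × X := Prod.map f f with hg
  have hgexp : ∀ p q : X × X, dist p q ≤ dist (g p) (g q) := by
    intro p q
    rw [Prod.dist_eq, Prod.dist_eq]
    exact max_le_max (h _ _) (h _ _)
  obtain ⟨k, hk1, hk⟩ := almost_recurrent g hgexp (x, y) (half_pos hε)
  have hgk : g^[k] (x, y) = (f^[k] x, f^[k] y) := by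
    rw [hg, Prod.map_iterate]; rfl
  rw [hgk, Prod.dist_eq] at hk
  have hx2 : dist (f^[k] x) x < ε / 2 := lt_of_le_of_lt (le_max_left _ _) hk
  have hy2 : dist (f^[k] y) y < ε / 2 := lt_of_le_of_lt (le_max_right _ _) hk
  obtain ⟨m, rfl⟩ : ∃ m, k = m + 1 := ⟨k - 1, by omega⟩
  have h1 : dist (f x) (f y) ≤ dist (f^[m + 1] x) (f^[m + 1] y) := by
    rw [Function.iterate_succ_apply, Function.iterate_succ_apply]
    exact expand_iterate f h m _ _
  calc dist (f x) (f y) ≤ dist (f^[m + 1] x) (f^[m + 1] y) := h1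
    _ ≤ dist (f^[m + 1] x) x + dist x y + dist y (f^[m + 1] y) := dist_triangle4 _ _ _ _
    _ ≤ ε / 2 + dist x y + ε / 2 := by
        have := hy2
        rw [dist_comm (f^[m + 1] y) y] at this
        exact add_le_add (add_le_add hx2.le le_rfl) this.le
    _ = dist x y + ε := by ring

lemma expand_surjective (f : X → X) (h : ∀ x y, dist x y ≤ dist (f x) (f y)) :
    Function.Surjective f := by
  intro x
  have hiso : Isometry f := Isometry.of_dist_eq (expand_isometry f h)
  have hrange : IsClosed (Set.range f) := (isCompact_range hiso.continuous).isClosed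
  have hx : x ∈ closure (Set.range f) := by
    rw [Metric.mem_closure_iff]
    intro ε hε
    obtain ⟨k, hk1, hk⟩ := almost_recurrent f h x hε
    obtain ⟨m, rfl⟩ : ∃ m, k = m + 1 := ⟨k - 1, by omega⟩
    exact ⟨f^[m + 1] x, ⟨f^[m] x, (Function.iterate_succ_apply' f m x).symm⟩,
      by rwa [dist_comm]⟩
  rwa [hrange.closure_eq] at hx

end Expansive

/-- A bijective `1`-Lipschitz map `T : S^n_+ → S^n_+` maps the equator onto
the equator. -/
theorem stmt14 (n : ℕ) (hn : 2 ≤ n) (T : Euc n → Euc n)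
    (hT_maps : ∀ x ∈ upperHemi n, T x ∈ upperHemi n)
    (hT_inj : Set.InjOn T (upperHemi n))
    (hT_surj : ∀ y ∈ upperHemi n, ∃ x ∈ upperHemi n, T x = y)
    (hT_lip : ∀ x ∈ upperHemi n, ∀ y ∈ upperHemi n, geod (T x) (T y) ≤ geod x y) :
    T '' equator n = equator n := by
  classical
  have hsphere : ∀ x ∈ upperHemi n, ‖x‖ = 1 := fun x hx =>
    mem_sphere_zero_iff_norm.mp hx.1
  have hinner_abs : ∀ x ∈ upperHemi n, ∀ y ∈ upperHemi n, |(inner ℝ x y : ℝ)| ≤ 1 := by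
    intro x hx y hy
    calc |(inner ℝ x y : ℝ)| ≤ ‖x‖ * ‖y‖ := abs_real_inner_le_norm x y
      _ = 1 := by rw [hsphere x hx, hsphere y hy, one_mul]
  -- `T` does not increase Euclidean distance.
  have hlipE : ∀ x ∈ upperHemi n, ∀ y ∈ upperHemi n, dist (T x) (T y) ≤ dist x y := by
    intro x hx y hy
    have hxs := hsphere x hx
    have hys := hsphere y hy
    have hTxs := hsphere _ (hT_maps x hx)
    have hTys := hsphere _ (hT_maps y hy)
    have hb := abs_le.mp (hinner_abs x hx y hy)
    have hb' := abs_le.mp (hinner_abs _ (hT_maps x hx) _ (hT_maps y hy))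
    have key : (inner ℝ x y : ℝ) ≤ (inner ℝ (T x) (T y) : ℝ) := by
      by_contra hcon
      push_neg at hcon
      have hmono := Real.strictAntiOn_arccos ⟨hb'.1, hb'.2⟩ ⟨hb.1, hb.2⟩ hcon
      have h2 := hT_lip x hx y hy
      unfold geod at h2
      linarith
    rw [dist_eq_norm, dist_eq_norm]
    have e1 : ‖T x - T y‖ ^ 2 = 2 - 2 * (inner ℝ (T x) (T y) : ℝ) := by
      rw [norm_sub_sq_real, hTxs, hTys]; ring
    have e2 : ‖x - y‖ ^ 2 = 2 - 2 * (inner ℝ x y : ℝ) := by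
      rw [norm_sub_sq_real, hxs, hys]; ring
    nlinarith [norm_nonneg (T x - T y), norm_nonneg (x - y)]
  -- preimages of equator points lie on the equator
  have hpre : ∀ x ∈ upperHemi n, T x ∈ equator n → x ∈ equator n := by
    intro x hx hTx
    have hTxs := hsphere _ (hT_maps x hx)
    have hnegmem : -(T x) ∈ upperHemi n := by
      constructor
      · have hn1 : ‖-(T x)‖ = 1 := by rw [norm_neg]; exact hTxs
        exact mem_sphere_zero_iff_norm.mpr hn1
      · have hco : (-(T x)) (Fin.last n) = -(T x (Fin.last n)) := rfl
        rw [hco, hTx.2, neg_zero]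
    obtain ⟨z, hz, hTz⟩ := hT_surj _ hnegmem
    have hgeod : geod (T x) (T z) = π := by
      rw [hTz]
      unfold geod
      rw [inner_neg_right, real_inner_self_eq_norm_sq, hTxs]
      norm_num [Real.arccos_neg_one]
    have h1 : π ≤ geod x z := hgeod ▸ hT_lip x hx z hz
    have h2 : geod x z ≤ π := Real.arccos_le_pi _
    have h3 : Real.arccos (inner ℝ x z) = π := le_antisymm h2 h1
    have hinner : (inner ℝ x z : ℝ) = -1 := by
      have hle := Real.arccos_eq_pi.mp h3
      have hge := (abs_le.mp (hinner_abs x hx z hz)).1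
      linarith
    have hzx : z = -x := by
      have hsum : ‖x + z‖ ^ 2 = 0 := by
        rw [norm_add_sq_real, hinner, hsphere x hx, hsphere z hz]; ring
      have hz0 : x + z = 0 := by
        have h4 : ‖x + z‖ = 0 := by
          have h5 := pow_eq_zero_iff (n := 2) (by norm_num) |>.mp hsum
          exact h5
        exact norm_eq_zero.mp h4
      exact eq_neg_of_add_eq_zero_right hz0
    have hzneg : 0 ≤ -(x (Fin.last n)) := by
      have h6 := hz.2
      rw [hzx] at h6
      exact h6
    exact ⟨hx, le_antisymm (by linarith) hx.2⟩
  have hEsub : equator n ⊆ upperHemi n := fun x hx => hx.1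
  -- the equator is compact
  have hEeq : equator n = unitSphere n ∩ {x : Euc n | x (Fin.last n) = 0} := by
    ext x
    constructor
    · rintro ⟨⟨h1, h2⟩, h3⟩; exact ⟨h1, h3⟩
    · rintro ⟨h1, h3⟩; exact ⟨⟨h1, le_of_eq h3.symm⟩, h3⟩
  have hcoord : Continuous (fun x : Euc n => x (Fin.last n)) :=
    (EuclideanSpace.proj (𝕜 := ℝ) (Fin.last n)).continuous
  have hEclosed : IsClosed (equator n) := by
    rw [hEeq]
    exact Metric.isClosed_sphere.inter (isClosed_eq hcoord continuous_const)
  have hEcomp : IsCompact (equator n) :=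
    (isCompact_sphere (0 : Euc n) 1).of_isClosed_subset hEclosed
      (fun x hx => (hEsub hx).1)
  haveI : CompactSpace (equator n) := isCompact_iff_compactSpace.mp hEcomp
  -- the preimage map on the equator
  have hchoice : ∀ y : equator n, ∃ x : equator n, T x = y := by
    rintro ⟨y, hy⟩
    obtain ⟨x, hx, hTx⟩ := hT_surj y (hEsub hy)
    exact ⟨⟨x, hpre x hx (hTx ▸ hy)⟩, hTx⟩
  choose S hS using hchoice
  have hSexp : ∀ a b : equator n, dist a b ≤ dist (S a) (S b) := by
    intro a b
    have hd := hlipE (S a) (hEsub (S a).2) (S b) (hEsub (S b).2)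
    rw [hS a, hS b] at hd
    rw [Subtype.dist_eq, Subtype.dist_eq]
    exact hd
  have hSsurj := expand_surjective S hSexp
  apply Set.Subset.antisymm
  · rintro _ ⟨x, hx, rfl⟩
    obtain ⟨y, hy⟩ := hSsurj ⟨x, hx⟩
    have hTxy : T x = (y : Euc n) := by
      rw [← hS y, hy]
    rw [hTxy]
    exact y.2
  · intro y hy
    obtain ⟨x, hx, hTx⟩ := hT_surj y (hEsub hy)
    exact ⟨x, hpre x hx (hTx.symm ▸ hy), hTx⟩

end
end
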